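/- arXiv:2101.02473 — 4 statements merged into one kernel-verified Lean document; each statement's English description precedes it below -/
import Mathlib

section
/- For n ∈ ℤ define φₙ : ℝ → ℂ by φₙ(y) = (1 + iy)ⁿ/(1 − iy)^{n+1}. Then for every x ∈ ℝ the principal value PV∫_ℝ φₙ(y)/(x−y) dy exists and equals −iπ·φₙ(x) if n ≥ 0, and equals +iπ·φₙ(x) if n ≤ −1. (Equivalently, the φₙ are eigenfunctions of the Hilbert transform.) -/
open MeasureTheory Filter Set Topology

/-- The rational basis functions `φₙ(y) = (1 + iy)ⁿ/(1 − iy)^{n+1}`. -/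
noncomputable def phi (n : ℤ) (y : ℝ) : ℂ :=
  (1 + Complex.I * (y : ℂ)) ^ n / (1 - Complex.I * (y : ℂ)) ^ (n + 1)

namespace PVphi
open Complex

lemma d1 (y : ℝ) : (1 : ℂ) - Complex.I * y ≠ 0 := by
  intro h
  have := congrArg Complex.re h
  simp at this

lemma d2 (y : ℝ) : (1 : ℂ) + Complex.I * y ≠ 0 := by
  intro h
  have := congrArg Complex.re h
  simp at this

/-- Cayley transform -/
noncomputable def W (y : ℝ) : ℂ := (1 + Complex.I * y) / (1 - Complex.I * y)

lemma W_ne_zero (y : ℝ) : W y ≠ 0 := div_ne_zero (d2 y) (d1 y)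

lemma phi_natCast (m : ℕ) (y : ℝ) : phi m y = W y ^ m / (1 - Complex.I * y) := by
  unfold phi W
  rw [show ((m : ℤ) + 1) = ((m + 1 : ℕ) : ℤ) by push_cast; ring]
  rw [zpow_natCast, zpow_natCast, div_pow, pow_succ]
  field_simp

noncomputable def hh (x y : ℝ) : ℂ := 1 / ((x : ℂ) - y) - Complex.I / (1 - Complex.I * y)

noncomputable def RR (x : ℝ) (m : ℕ) (y : ℝ) : ℂ :=
  (-1 / (1 - Complex.I * x)) * ∑ i ∈ Finset.range m, (W y ^ (i + 1) / ((i : ℂ) + 1)) * W x ^ (m - 1 - i)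

noncomputable def rr (x : ℝ) (m : ℕ) (y : ℝ) : ℂ :=
  (-2 * Complex.I / ((1 - Complex.I * x) * (1 - Complex.I * y) ^ 2)) *
    ∑ i ∈ Finset.range m, W y ^ i * W x ^ (m - 1 - i)

lemma hasDerivAt_W (y : ℝ) : HasDerivAt W (2 * Complex.I / (1 - Complex.I * y) ^ 2) y := by
  have h0 : HasDerivAt (fun y : ℝ => (y : ℂ)) 1 y := by
    simpa using (hasDerivAt_id y).ofReal_comp
  have h1 : HasDerivAt (fun y : ℝ => 1 + Complex.I * y) Complex.I y := by
    simpa using (h0.const_mul Complex.I).const_add 1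
  have h2 : HasDerivAt (fun y : ℝ => 1 - Complex.I * y) (-Complex.I) y := by
    simpa using (h0.const_mul Complex.I).const_sub 1
  have := h1.div h2 (d1 y)
  convert (preTransparency := .default) this using 1
  have := d1 y
  field_simp
  ring


lemma hasDerivAt_RR (x : ℝ) (m : ℕ) (y : ℝ) : HasDerivAt (RR x m) (rr x m y) y := by
  have hsum : HasDerivAt (fun y => ∑ i ∈ Finset.range m, (W y ^ (i + 1) / ((i : ℂ) + 1)) * W x ^ (m - 1 - i))
      (∑ i ∈ Finset.range m, (W y ^ i * (2 * Complex.I / (1 - Complex.I * y) ^ 2)) * W x ^ (m - 1 - i)) y := by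
    apply HasDerivAt.fun_sum
    intro i _
    have hi : ((i : ℂ) + 1) ≠ 0 := Nat.cast_add_one_ne_zero i
    have hp : HasDerivAt (fun y => W y ^ (i + 1))
        ((((i : ℂ) + 1) * W y ^ i) * (2 * Complex.I / (1 - Complex.I * y) ^ 2)) y := by
      have := (hasDerivAt_pow (i + 1) (W y)).comp y (hasDerivAt_W y)
      simpa [Function.comp_def] using this
    have := (hp.div_const ((i : ℂ) + 1)).mul_const (W x ^ (m - 1 - i))
    convert (preTransparency := .default) this using 2
    rw [mul_assoc, mul_div_cancel_left₀ _ hi]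
  have := hsum.const_mul (-1 / (1 - Complex.I * x))
  convert (preTransparency := .default) this using 1
  unfold rr
  rw [Finset.mul_sum, Finset.mul_sum]
  apply Finset.sum_congr rfl
  intro i _
  have := d1 x; have := d1 y
  field_simp

lemma key_algebra (x : ℝ) (m : ℕ) (y : ℝ) (hxy : y ≠ x) :
    phi m y / ((x : ℂ) - y) = phi m x * hh x y + rr x m y := by
  have hxyC : ((x : ℂ) - y) ≠ 0 := by
    simpa [sub_eq_zero] using fun h => hxy (by exact_mod_cast h.symm)
  have hgs := geom_sum₂_mul (W y) (W x) m
  -- step A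
  have stepA : phi m y / ((x : ℂ) - y) - phi m x * hh x y
      = (W y ^ m - W x ^ m) / (((x : ℂ) - y) * (1 - Complex.I * y)) := by
    rw [phi_natCast, phi_natCast]
    generalize W y ^ m = gy
    generalize W x ^ m = gx
    unfold hh
    have := d1 x; have := d1 y
    field_simp
    ring
  -- step B
  have stepB : (W y ^ m - W x ^ m) / (((x : ℂ) - y) * (1 - Complex.I * y)) = rr x m y := by
    rw [← hgs]
    unfold rr
    rw [mul_comm (-2 * Complex.I / ((1 - Complex.I * x) * (1 - Complex.I * y) ^ 2)), mul_div_assoc]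
    congr 1
    have := d1 x; have := d1 y
    unfold W
    field_simp
    ring
  linear_combination stepA + stepB


lemma fac (y : ℝ) : (1:ℂ) + (y:ℂ)^2 = (1 - Complex.I*y) * (1 + Complex.I*y) := by
  linear_combination ((y:ℂ)^2) * Complex.I_sq

lemma q_ne (y : ℝ) : (1:ℂ) + (y:ℂ)^2 ≠ 0 := by
  rw [fac]; exact mul_ne_zero (d1 y) (d2 y)

lemma Idiv (y : ℝ) : Complex.I / (1 - Complex.I*y) = (Complex.I - y) / (1 + (y:ℂ)^2) := by
  rw [div_eq_div_iff (d1 y) (q_ne y)]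
  linear_combination (y:ℂ) * Complex.I_sq

noncomputable def HH (x : ℝ) (y : ℝ) : ℂ :=
  ((1/2 * Real.log (1 + y^2) - Real.log |y - x| : ℝ) : ℂ) - Complex.I * (Real.arctan y : ℂ)

lemma hasDerivAt_HH (x : ℝ) (y : ℝ) (hxy : y ≠ x) : HasDerivAt (HH x) (hh x y) y := by
  have h1y : (0:ℝ) < 1 + y^2 := by positivity
  have hyx : y - x ≠ 0 := sub_ne_zero.2 hxy
  have hP1 : HasDerivAt (fun y : ℝ => 1/2 * Real.log (1 + y^2)) (y / (1 + y^2)) y := by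
    have h2 : HasDerivAt (fun y : ℝ => 1 + y^2) (2*y) y := by
      simpa using ((hasDerivAt_pow 2 y).const_add 1)
    have := (Real.hasDerivAt_log h1y.ne').comp y h2
    convert (preTransparency := .default) this.const_mul (1/2 : ℝ) using 1
    field_simp
  have hP2 : HasDerivAt (fun y : ℝ => Real.log |y - x|) ((y - x)⁻¹) y := by
    have habs : (fun y : ℝ => Real.log |y - x|) = fun y : ℝ => Real.log (y - x) := by
      funext t; rw [Real.log_abs]
    rw [habs]
    have hid : HasDerivAt (fun y : ℝ => y - x) 1 y := (hasDerivAt_id y).sub_const x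
    have := (Real.hasDerivAt_log hyx).comp y hid
    simpa [Function.comp_def] using this
  have hP := (hP1.sub hP2).ofReal_comp
  have hA := ((Real.hasDerivAt_arctan y).ofReal_comp).const_mul Complex.I
  have := hP.sub hA
  convert (preTransparency := .default) this using 1
  unfold hh
  have hd1 := d1 y
  have hd2 := d2 y
  have hxyC : ((x : ℂ) - y) ≠ 0 := by
    rw [sub_ne_zero]
    exact_mod_cast fun h => hxy ((by exact_mod_cast h.symm))
  have h1yC : ((1:ℝ) + y^2 : ℝ) ≠ 0 := h1y.ne'
  push_cast
  rw [Idiv]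
  have hq := q_ne y
  have hyxC : (y:ℂ) - x ≠ 0 := fun h => hxyC (by linear_combination -h)
  field_simp
  ring


lemma tendsto_ratio (c : ℝ) :
    Tendsto (fun y : ℝ => Real.sqrt (1 + y ^ 2) / (y - c)) atTop (𝓝 1) := by
  have hinv : Tendsto (fun y : ℝ => y⁻¹) atTop (𝓝 0) := tendsto_inv_atTop_zero
  have h1 : Tendsto (fun y : ℝ => Real.sqrt (y⁻¹ ^ 2 + 1) / (1 - c * y⁻¹)) atTop (𝓝 1) := by
    have hnum : Tendsto (fun y : ℝ => Real.sqrt (y⁻¹ ^ 2 + 1)) atTop (𝓝 1) := by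
      have h : Tendsto (fun y : ℝ => y⁻¹ ^ 2 + 1) atTop (𝓝 1) := by
        simpa using (hinv.pow 2).add_const (1:ℝ)
      simpa [Function.comp_def] using (Real.continuous_sqrt.tendsto 1).comp h
    have hden : Tendsto (fun y : ℝ => 1 - c * y⁻¹) atTop (𝓝 1) := by
      simpa using (hinv.const_mul c).const_sub (1:ℝ)
    simpa [Pi.div_def] using hnum.div hden one_ne_zero
  apply h1.congr'
  filter_upwards [eventually_gt_atTop 0, eventually_gt_atTop c] with y hy0 hyc
  have hyne : y ≠ 0 := hy0.ne'
  have hycne : y - c ≠ 0 := sub_ne_zero.2 hyc.ne'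
  have h2 : Real.sqrt (y⁻¹ ^ 2 + 1) = Real.sqrt (1 + y ^ 2) / y := by
    rw [show y⁻¹ ^ 2 + 1 = (1 + y ^ 2) / y ^ 2 by field_simp]
    rw [Real.sqrt_div (by positivity), Real.sqrt_sq hy0.le]
  rw [h2]
  field_simp

lemma tendsto_P_atTop (x : ℝ) :
    Tendsto (fun y : ℝ => 1/2 * Real.log (1 + y ^ 2) - Real.log |y - x|) atTop (𝓝 0) := by
  have h := (Real.continuousAt_log one_ne_zero).tendsto.comp (tendsto_ratio x)
  rw [Real.log_one] at h
  apply h.congr'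
  filter_upwards [eventually_gt_atTop x] with y hyx
  have hs : (0:ℝ) < Real.sqrt (1 + y ^ 2) := Real.sqrt_pos.2 (by positivity)
  simp only [Function.comp]
  rw [Real.log_div hs.ne' (sub_ne_zero.2 hyx.ne'), Real.log_sqrt (by positivity),
    abs_of_pos (sub_pos.2 hyx)]
  ring

lemma tendsto_P_atBot (x : ℝ) :
    Tendsto (fun y : ℝ => 1/2 * Real.log (1 + y ^ 2) - Real.log |y - x|) atBot (𝓝 0) := by
  have h := (tendsto_P_atTop (-x)).comp tendsto_neg_atBot_atTop
  apply h.congr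
  intro y
  simp only [Function.comp]
  rw [neg_sq, show -y - -x = -(y - x) by ring, abs_neg]

lemma tendsto_HH_atTop (x : ℝ) :
    Tendsto (HH x) atTop (𝓝 (-(Complex.I * ((Real.pi : ℂ)/2)))) := by
  have h1 : Tendsto (fun y : ℝ => ((1/2 * Real.log (1 + y ^ 2) - Real.log |y - x| : ℝ) : ℂ))
      atTop (𝓝 0) := by
    have := (Complex.continuous_ofReal.tendsto 0).comp (tendsto_P_atTop x)
    simpa only [Function.comp_def, Complex.ofReal_zero] using this
  have h2 : Tendsto (fun y : ℝ => Complex.I * ((Real.arctan y : ℝ) : ℂ))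
      atTop (𝓝 (Complex.I * ((Real.pi : ℂ)/2))) := by
    have ha := Real.tendsto_arctan_atTop.mono_right nhdsWithin_le_nhds
    have hb := ((Complex.continuous_ofReal.tendsto (Real.pi/2)).comp ha).const_mul Complex.I
    simpa only [Function.comp_def, Complex.ofReal_div, Complex.ofReal_ofNat] using hb
  unfold HH
  convert h1.sub h2 using 2
  ring

lemma tendsto_HH_atBot (x : ℝ) :
    Tendsto (HH x) atBot (𝓝 (Complex.I * ((Real.pi : ℂ)/2))) := by
  have h1 : Tendsto (fun y : ℝ => ((1/2 * Real.log (1 + y ^ 2) - Real.log |y - x| : ℝ) : ℂ))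
      atBot (𝓝 0) := by
    have := (Complex.continuous_ofReal.tendsto 0).comp (tendsto_P_atBot x)
    simpa only [Function.comp_def, Complex.ofReal_zero] using this
  have h2 : Tendsto (fun y : ℝ => Complex.I * ((Real.arctan y : ℝ) : ℂ))
      atBot (𝓝 (Complex.I * (-((Real.pi : ℂ)/2)))) := by
    have ha := Real.tendsto_arctan_atBot.mono_right nhdsWithin_le_nhds
    have hb := ((Complex.continuous_ofReal.tendsto (-(Real.pi/2))).comp ha).const_mul Complex.I
    simpa only [Function.comp_def, Complex.ofReal_neg, Complex.ofReal_div,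
      Complex.ofReal_ofNat] using hb
  unfold HH
  convert h1.sub h2 using 2
  ring

lemma tendsto_W_atTop : Tendsto W atTop (𝓝 (-1)) := by
  have hinv : Tendsto (fun y : ℝ => ((y⁻¹ : ℝ) : ℂ)) atTop (𝓝 0) := by
    have := (Complex.continuous_ofReal.tendsto 0).comp (tendsto_inv_atTop_zero (𝕜 := ℝ))
    simpa only [Function.comp_def, Complex.ofReal_zero] using this
  have h : Tendsto (fun y : ℝ => (((y⁻¹:ℝ):ℂ) + Complex.I) / (((y⁻¹:ℝ):ℂ) - Complex.I))
      atTop (𝓝 (-1)) := by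
    have hnum := hinv.add_const Complex.I
    have hden := hinv.sub_const Complex.I
    have hne : (0:ℂ) - Complex.I ≠ 0 := by
      simpa using Complex.I_ne_zero
    have := hnum.div hden hne
    convert (preTransparency := .default) this using 2
    rw [zero_add, zero_sub, div_neg, div_self Complex.I_ne_zero]
  apply h.congr'
  filter_upwards [eventually_ne_atTop (0:ℝ)] with y hy
  have hyC : (y:ℂ) ≠ 0 := by exact_mod_cast hy
  have h_ne : ((y⁻¹:ℝ):ℂ) - Complex.I ≠ 0 := by
    intro h
    have := congrArg Complex.im h
    simp at this
  unfold W
  rw [div_eq_div_iff h_ne (d1 y)]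
  push_cast
  field_simp


lemma tendsto_W_atBot : Tendsto W atBot (𝓝 (-1)) := by
  have h := tendsto_W_atTop.comp tendsto_neg_atBot_atTop
  have hW : ∀ y : ℝ, W (-y) = (W y)⁻¹ := by
    intro y
    unfold W
    rw [inv_div]
    push_cast
    ring_nf
  have h2 : Tendsto (fun y : ℝ => (W y)⁻¹) atBot (𝓝 (-1)) := by
    apply h.congr
    intro y
    simp only [Function.comp_def]
    rw [hW]
  have h3 := h2.inv₀ (by norm_num)
  norm_num at h3
  exact h3

noncomputable def LL (x : ℝ) (m : ℕ) : ℂ :=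
  (-1 / (1 - Complex.I * x)) *
    ∑ i ∈ Finset.range m, ((-1 : ℂ) ^ (i + 1) / ((i : ℂ) + 1)) * W x ^ (m - 1 - i)

lemma tendsto_RR (x : ℝ) (m : ℕ) {l : Filter ℝ} (hW : Tendsto W l (𝓝 (-1))) :
    Tendsto (RR x m) l (𝓝 (LL x m)) := by
  unfold RR LL
  apply Tendsto.const_mul
  apply tendsto_finset_sum
  intro i _
  exact ((hW.pow (i + 1)).div_const _).mul_const _

lemma continuous_W : Continuous W := by
  apply Continuous.div
  · continuity
  · continuity
  · exact fun y => d1 y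

lemma continuous_RR (x : ℝ) (m : ℕ) : Continuous (RR x m) := by
  unfold RR
  exact continuous_const.mul (continuous_finset_sum _ fun i _ =>
    ((continuous_W.pow (i + 1)).div_const _).mul continuous_const)

lemma norm_phi (m : ℕ) (y : ℝ) : ‖phi m y‖ = (Real.sqrt (1 + y ^ 2))⁻¹ := by
  have habs1 : ‖(1 + Complex.I * y)‖ = Real.sqrt (1 + y ^ 2) := by
    rw [Complex.norm_def]
    congr 1
    simp [Complex.normSq_apply]
    ring
  have habs2 : ‖(1 - Complex.I * y)‖ = Real.sqrt (1 + y ^ 2) := by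
    rw [Complex.norm_def]
    congr 1
    simp [Complex.normSq_apply]
    ring
  have hs : (0:ℝ) < Real.sqrt (1 + y ^ 2) := Real.sqrt_pos.2 (by positivity)
  rw [phi_natCast, norm_div, norm_pow]
  unfold W
  rw [norm_div]
  show (‖_‖ / ‖_‖) ^ m / ‖_‖ = _
  rw [habs1, habs2, div_self hs.ne', one_pow]
  rw [one_div]


lemma integrableOn_main (x : ℝ) (m : ℕ) {ε : ℝ} (hε : 0 < ε) :
    IntegrableOn (fun y : ℝ => phi m y / ((x : ℂ) - y)) {y : ℝ | ε ≤ |y - x|} := by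
  set S : Set ℝ := {y : ℝ | ε ≤ |y - x|} with hS
  have hSm : MeasurableSet S := by
    apply IsClosed.measurableSet
    have : Continuous fun y : ℝ => |y - x| := (continuous_id.sub continuous_const).abs
    exact isClosed_le continuous_const this
  set C : ℝ := (1 + |x|) / ε + 1 with hC
  have hCpos : 0 < C := by positivity
  apply Integrable.mono' ((integrable_inv_one_add_sq.const_mul C).restrict (s := S))
  · -- AEStronglyMeasurable
    apply ContinuousOn.aestronglyMeasurable _ hSm
    apply ContinuousOn.div
    · apply Continuous.continuousOn
      have heq : phi (m : ℤ) = fun y : ℝ => W y ^ m / (1 - Complex.I * y) :=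
        funext fun y => phi_natCast m y
      rw [heq]
      exact (continuous_W.pow m).div (by continuity) (fun y => d1 y)
    · exact Continuous.continuousOn (by continuity)
    · intro y hy hzero
      rw [sub_eq_zero] at hzero
      have hxy : x = y := by exact_mod_cast hzero
      have h2 : ε ≤ |y - x| := hy
      rw [hxy] at h2
      simp at h2
      linarith
  · -- norm bound
    filter_upwards [ae_restrict_mem hSm] with y hy
    have hyS : ε ≤ |y - x| := hy
    have hs : (0:ℝ) < Real.sqrt (1 + y ^ 2) := Real.sqrt_pos.2 (by positivity)
    have habs : (0:ℝ) < |x - y| := by rw [abs_sub_comm]; linarith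
    have hxyC : ‖(x : ℂ) - y‖ = |x - y| := by
      rw [show ((x:ℂ) - y) = ((x - y : ℝ) : ℂ) by push_cast; ring, Complex.norm_real]
      exact Real.norm_eq_abs _
    have h1 : Real.sqrt (1 + y ^ 2) ≤ C * |x - y| := by
      have e1 : Real.sqrt (1 + y ^ 2) ≤ 1 + |y| := by
        rw [show (1:ℝ) + |y| = Real.sqrt ((1 + |y|) ^ 2) by
          rw [Real.sqrt_sq (by positivity)]]
        apply Real.sqrt_le_sqrt
        have : 0 ≤ |y| := abs_nonneg y
        nlinarith [_root_.sq_abs y]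
      have e2 : |y| ≤ |x| + |y - x| := by
        have := abs_sub_abs_le_abs_sub y x
        linarith [abs_nonneg (y - x)]
      have e3 : 1 + |x| ≤ (1 + |x|) / ε * |y - x| := by
        rw [div_mul_eq_mul_div, le_div_iff₀ hε]
        have hnn : (0:ℝ) ≤ 1 + |x| := by positivity
        nlinarith
      have e4 : |y - x| = |x - y| := abs_sub_comm y x
      rw [hC]
      nlinarith
    rw [norm_div, norm_phi, hxyC]
    have key : 1 + y ^ 2 ≤ C * (Real.sqrt (1 + y ^ 2) * |x - y|) := by
      nlinarith [Real.sq_sqrt (show (0:ℝ) ≤ 1 + y ^ 2 by positivity)]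
    have hgoal : 1 / (Real.sqrt (1 + y ^ 2) * |x - y|) ≤ C / (1 + y ^ 2) := by
      rw [div_le_div_iff₀ (by positivity) (by positivity)]
      nlinarith
    calc (Real.sqrt (1 + y ^ 2))⁻¹ / |x - y|
        = 1 / (Real.sqrt (1 + y ^ 2) * |x - y|) := by
          rw [one_div, mul_inv]
          rw [div_eq_mul_inv]
      _ ≤ C / (1 + y ^ 2) := hgoal
      _ = C * (1 + y ^ 2)⁻¹ := by rw [div_eq_mul_inv]


noncomputable def GG (x : ℝ) (m : ℕ) (y : ℝ) : ℂ := phi m x * HH x y + RR x m y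

lemma hasDerivAt_GG (x : ℝ) (m : ℕ) (y : ℝ) (hxy : y ≠ x) :
    HasDerivAt (GG x m) (phi m y / ((x : ℂ) - y)) y := by
  have h := ((hasDerivAt_HH x y hxy).const_mul (phi m x)).add (hasDerivAt_RR x m y)
  rw [key_algebra x m y hxy]
  exact h

lemma subset_S_Ioi (x : ℝ) {ε : ℝ} (hε : 0 < ε) : Ioi (x + ε) ⊆ {y : ℝ | ε ≤ |y - x|} := by
  intro y hy
  simp only [Set.mem_Ioi] at hy
  simp only [mem_setOf_eq]
  rw [abs_of_pos (by linarith)] <;> linarith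

lemma subset_S_Iic (x : ℝ) {ε : ℝ} (hε : 0 < ε) : Iic (x - ε) ⊆ {y : ℝ | ε ≤ |y - x|} := by
  intro y hy
  simp only [Set.mem_Iic] at hy
  simp only [mem_setOf_eq]
  rw [abs_of_nonpos (by linarith)] <;> linarith

lemma integral_Ioi_eq (x : ℝ) (m : ℕ) {ε : ℝ} (hε : 0 < ε) :
    ∫ y in Ioi (x + ε), phi m y / ((x : ℂ) - y)
      = (phi m x * (-(Complex.I * ((Real.pi : ℂ) / 2))) + LL x m) - GG x m (x + ε) := by
  apply integral_Ioi_of_hasDerivAt_of_tendsto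
  · exact (hasDerivAt_GG x m (x + ε) (by intro h; linarith [hε])).continuousAt.continuousWithinAt
  · intro y hy
    exact hasDerivAt_GG x m y (by simp only [Set.mem_Ioi] at hy; intro h; linarith)
  · exact (integrableOn_main x m hε).mono_set (subset_S_Ioi x hε)
  · exact ((tendsto_HH_atTop x).const_mul (phi m x)).add (tendsto_RR x m tendsto_W_atTop)

lemma integral_Iic_eq (x : ℝ) (m : ℕ) {ε : ℝ} (hε : 0 < ε) :
    ∫ y in Iic (x - ε), phi m y / ((x : ℂ) - y)
      = GG x m (x - ε) - (phi m x * (Complex.I * ((Real.pi : ℂ) / 2)) + LL x m) := by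
  apply integral_Iic_of_hasDerivAt_of_tendsto
  · exact (hasDerivAt_GG x m (x - ε) (by intro h; linarith [hε])).continuousAt.continuousWithinAt
  · intro y hy
    exact hasDerivAt_GG x m y (by simp only [Set.mem_Iio] at hy; intro h; linarith)
  · exact (integrableOn_main x m hε).mono_set (subset_S_Iic x hε)
  · exact ((tendsto_HH_atBot x).const_mul (phi m x)).add (tendsto_RR x m tendsto_W_atBot)


noncomputable def Psi (x : ℝ) (m : ℕ) (ε : ℝ) : ℂ :=
  phi m x * (((1/2 * Real.log (1 + (x - ε) ^ 2) - 1/2 * Real.log (1 + (x + ε) ^ 2) : ℝ) : ℂ)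
      - Complex.I * ((Real.arctan (x - ε) - Real.arctan (x + ε) : ℝ) : ℂ))
    + (RR x m (x - ε) - RR x m (x + ε)) - Complex.I * (Real.pi : ℂ) * phi m x

lemma integral_eq_Psi (x : ℝ) (m : ℕ) {ε : ℝ} (hε : 0 < ε) :
    ∫ y in {y : ℝ | ε < |y - x|}, phi m y / ((x : ℂ) - y) = Psi x m ε := by
  have hset : {y : ℝ | ε < |y - x|} = Iio (x - ε) ∪ Ioi (x + ε) := by
    ext y
    simp only [mem_setOf_eq, Set.mem_union, Set.mem_Iio, Set.mem_Ioi, lt_abs]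
    constructor
    · rintro (h | h)
      · right; linarith
      · left; linarith
    · rintro (h | h)
      · right; linarith
      · left; linarith
  have hdisj : Disjoint (Iio (x - ε)) (Ioi (x + ε)) := by
    apply Set.disjoint_left.2
    intro y hy hy2
    simp only [Set.mem_Iio] at hy
    simp only [Set.mem_Ioi] at hy2
    linarith
  have hint1 : IntegrableOn (fun y : ℝ => phi m y / ((x : ℂ) - y)) (Iio (x - ε)) :=
    (integrableOn_main x m hε).mono_set ((Set.Iio_subset_Iic_self).trans (subset_S_Iic x hε))
  have hint2 : IntegrableOn (fun y : ℝ => phi m y / ((x : ℂ) - y)) (Ioi (x + ε)) :=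
    (integrableOn_main x m hε).mono_set (subset_S_Ioi x hε)
  rw [hset, setIntegral_union hdisj measurableSet_Ioi hint1 hint2]
  rw [← integral_Iic_eq_integral_Iio, integral_Iic_eq x m hε, integral_Ioi_eq x m hε]
  unfold Psi GG HH
  rw [show |x - ε - x| = ε by rw [show x - ε - x = -ε by ring, abs_neg, abs_of_pos hε]]
  rw [show |x + ε - x| = ε by rw [show x + ε - x = ε by ring, abs_of_pos hε]]
  push_cast
  ring

lemma tendsto_Psi (x : ℝ) (m : ℕ) :
    Tendsto (Psi x m) (𝓝[>] (0:ℝ)) (𝓝 (-Complex.I * (Real.pi : ℂ) * phi m x)) := by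
  have hraw1 : ContinuousAt (fun ε : ℝ => Real.log (1 + (x - ε) ^ 2)) 0 := by
    have hin : ContinuousAt (fun ε : ℝ => 1 + (x - ε) ^ 2) 0 :=
      Continuous.continuousAt (by continuity)
    have hlog := Real.continuousAt_log (x := 1 + (x - 0) ^ 2) (by positivity)
    exact ContinuousAt.comp (g := Real.log) hlog hin
  have hraw2 : ContinuousAt (fun ε : ℝ => Real.log (1 + (x + ε) ^ 2)) 0 := by
    have hin : ContinuousAt (fun ε : ℝ => 1 + (x + ε) ^ 2) 0 :=
      Continuous.continuousAt (by continuity)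
    have hlog := Real.continuousAt_log (x := 1 + (x + 0) ^ 2) (by positivity)
    exact ContinuousAt.comp (g := Real.log) hlog hin
  have hA : ContinuousAt (fun ε : ℝ =>
      ((1/2 * Real.log (1 + (x - ε) ^ 2) - 1/2 * Real.log (1 + (x + ε) ^ 2) : ℝ) : ℂ)) 0 :=
    Complex.continuous_ofReal.continuousAt.comp ((hraw1.const_mul _).sub (hraw2.const_mul _))
  have hB : ContinuousAt (fun ε : ℝ =>
      ((Real.arctan (x - ε) - Real.arctan (x + ε) : ℝ) : ℂ)) 0 :=
    Complex.continuous_ofReal.continuousAt.comp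
      (((Real.continuous_arctan.comp (by continuity : Continuous fun ε : ℝ => x - ε)).continuousAt).sub
        ((Real.continuous_arctan.comp (by continuity : Continuous fun ε : ℝ => x + ε)).continuousAt))
  have hC : ContinuousAt (fun ε : ℝ => RR x m (x - ε)) 0 :=
    ((continuous_RR x m).comp (by continuity : Continuous fun ε : ℝ => x - ε)).continuousAt
  have hD : ContinuousAt (fun ε : ℝ => RR x m (x + ε)) 0 :=
    ((continuous_RR x m).comp (by continuity : Continuous fun ε : ℝ => x + ε)).continuousAt
  have hcont : ContinuousAt (Psi x m) 0 := by
    unfold Psi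
    exact ((continuousAt_const.mul (hA.sub (continuousAt_const.mul hB))).add
      (hC.sub hD)).sub continuousAt_const
  have hval : Psi x m 0 = -Complex.I * (Real.pi : ℂ) * phi m x := by
    unfold Psi
    simp only [sub_zero, add_zero, sub_self]
    push_cast
    ring
  have h2 : Tendsto (Psi x m) (𝓝[>] (0:ℝ)) (𝓝 (Psi x m 0)) :=
    hcont.tendsto.mono_left nhdsWithin_le_nhds
  rwa [hval] at h2

theorem main_nat (m : ℕ) (x : ℝ) :
    Tendsto (fun ε : ℝ => ∫ y in {y : ℝ | ε < |y - x|}, phi m y / ((x : ℂ) - y))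
      (𝓝[>] (0:ℝ)) (𝓝 (-Complex.I * (Real.pi : ℂ) * phi m x)) := by
  apply (tendsto_Psi x m).congr'
  filter_upwards [self_mem_nhdsWithin] with ε hε
  exact (integral_eq_Psi x m hε).symm


lemma conj_1p (y : ℝ) : (starRingEnd ℂ) (1 + Complex.I * y) = 1 - Complex.I * y := by
  simp [map_add, map_mul, Complex.conj_I, Complex.conj_ofReal]
  try ring

lemma conj_1m (y : ℝ) : (starRingEnd ℂ) (1 - Complex.I * y) = 1 + Complex.I * y := by
  simp [map_sub, map_mul, Complex.conj_I, Complex.conj_ofReal]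
  try ring

lemma phi_neg_eq (m : ℕ) (y : ℝ) : phi (-(m : ℤ) - 1) y = (starRingEnd ℂ) (phi m y) := by
  unfold phi
  rw [map_div₀, map_zpow₀, map_zpow₀, conj_1p, conj_1m]
  rw [show (-(m:ℤ) - 1) + 1 = -(m:ℤ) by ring, show (-(m:ℤ) - 1) = -((m:ℤ) + 1) by ring]
  rw [zpow_neg, zpow_neg, inv_div_inv]

end PVphi

open PVphi in
/-- For every `n ∈ ℤ` and `x ∈ ℝ`, the principal value
`PV∫_ℝ φₙ(y)/(x−y) dy` exists and equals `−iπ·φₙ(x)` if `n ≥ 0` and `+iπ·φₙ(x)`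
if `n ≤ −1`: the `φₙ` are eigenfunctions of the Hilbert transform. -/
theorem pv_phi_eigenfunction (n : ℤ) (x : ℝ) :
    Tendsto
      (fun ε : ℝ => ∫ y in {y : ℝ | ε < |y - x|}, phi n y / ((x : ℂ) - (y : ℂ)))
      (𝓝[>] 0)
      (𝓝 (if 0 ≤ n then -Complex.I * (Real.pi : ℂ) * phi n x
        else Complex.I * (Real.pi : ℂ) * phi n x)) := by
  rcases le_or_gt 0 n with hn | hn
  · rw [if_pos hn]
    obtain ⟨m, rfl⟩ := Int.eq_ofNat_of_zero_le hn
    exact main_nat m x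
  · rw [if_neg (not_le.2 hn)]
    obtain ⟨m, hm⟩ : ∃ m : ℕ, n = -(m : ℤ) - 1 := ⟨(-n - 1).toNat, by omega⟩
    subst hm
    have key := main_nat m x
    have hconj : ∀ ε : ℝ, ∫ y in {y : ℝ | ε < |y - x|}, phi (-(m:ℤ) - 1) y / ((x:ℂ) - y)
        = (starRingEnd ℂ) (∫ y in {y : ℝ | ε < |y - x|}, phi m y / ((x:ℂ) - y)) := by
      intro ε
      rw [← integral_conj]
      apply setIntegral_congr_fun (by
        apply IsOpen.measurableSet
        have : Continuous fun y : ℝ => |y - x| := (continuous_id.sub continuous_const).abs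
        exact isOpen_lt continuous_const this)
      intro y _
      show phi (-(m:ℤ) - 1) y / ((x:ℂ) - y) = (starRingEnd ℂ) (phi (m:ℤ) y / ((x:ℂ) - y))
      rw [phi_neg_eq, map_div₀]
      congr 1
      rw [map_sub, Complex.conj_ofReal, Complex.conj_ofReal]
    have h2 : Tendsto (fun ε : ℝ => (starRingEnd ℂ)
          (∫ y in {y : ℝ | ε < |y - x|}, phi m y / ((x:ℂ) - y)))
        (𝓝[>] (0:ℝ)) (𝓝 ((starRingEnd ℂ) (-Complex.I * (Real.pi : ℂ) * phi m x))) :=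
      ((Complex.continuous_conj.tendsto _).comp key)
    have h3 : (starRingEnd ℂ) (-Complex.I * (Real.pi : ℂ) * phi m x)
        = Complex.I * (Real.pi : ℂ) * phi (-(m:ℤ) - 1) x := by
      rw [phi_neg_eq]
      rw [map_mul, map_mul, map_neg, Complex.conj_I, Complex.conj_ofReal]
      ring
    rw [h3] at h2
    exact h2.congr (fun ε => (hconj ε).symm)
end

section
/- Let f : ℝ → ℝ be a Schwartz function, and for x ∈ ℝ let h(x) := PV∫_ℝ f(y)/(x−y) dy (which exists for every x). Then x·h(x) → ∫_ℝ f(y) dy both as x → +∞ and as x → −∞. In particular, the Hilbert transform (1/π)·h of a Schwartz function decays only like 1/|x| at infinity whenever ∫_ℝ f ≠ 0. -/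
open MeasureTheory Filter Set Topology
open scoped ENNReal

namespace PVSchwartz

/-- The candidate principal value: integral over `(0,1)` of the symmetrized difference
quotient plus the integral over `{y | 1 ≤ |y - x|}`. -/
noncomputable def pv (f : SchwartzMap ℝ ℝ) (x : ℝ) : ℝ :=
  (∫ t in Ioo (0:ℝ) 1, (f (x - t) - f (x + t)) / t) +
    ∫ y in {y : ℝ | 1 ≤ |y - x|}, f y / (x - y)

variable (f : SchwartzMap ℝ ℝ)

lemma meas_kernel (x : ℝ) : Measurable (fun y : ℝ => f y / (x - y)) :=
  f.continuous.measurable.div (measurable_const.sub measurable_id)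

lemma measS (x : ℝ) : MeasurableSet {y : ℝ | 1 ≤ |y - x|} :=
  (isClosed_le continuous_const ((continuous_id.sub continuous_const).abs)).measurableSet

lemma f_bound : ∃ C : ℝ, 0 < C ∧ ∀ u : ℝ, |f u| ≤ C := by
  obtain ⟨C, hC, h⟩ := f.decay 0 0
  refine ⟨C, hC, fun u => ?_⟩
  simpa [norm_iteratedFDeriv_zero] using h u

lemma deriv_bound : ∃ C : ℝ, 0 < C ∧ ∀ u : ℝ, |deriv f u| ≤ C := by
  obtain ⟨C, hC, h⟩ := (SchwartzMap.derivCLM ℝ ℝ f).decay 0 0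
  refine ⟨C, hC, fun u => ?_⟩
  have := h u
  simpa [norm_iteratedFDeriv_zero, SchwartzMap.derivCLM_apply] using this

lemma outer_integrable (x : ℝ) :
    IntegrableOn (fun y : ℝ => f y / (x - y)) {y : ℝ | 1 ≤ |y - x|} := by
  refine Integrable.mono' ((f.integrable (μ := volume)).norm.restrict)
    (meas_kernel f x).aestronglyMeasurable ?_
  refine (ae_restrict_iff' (measS x)).2 (Eventually.of_forall fun y hy => ?_)
  have h1 : (1:ℝ) ≤ |y - x| := hy
  have hxy : (1:ℝ) ≤ |x - y| := by rwa [abs_sub_comm]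
  rw [Real.norm_eq_abs, abs_div, Real.norm_eq_abs]
  exact div_le_self (abs_nonneg _) hxy

/-- integrability of the kernel on sets staying away from the singularity -/
lemma kernel_intOn {x : ℝ} {s : Set ℝ} (hsm : MeasurableSet s) (hfin : volume s < ∞)
    {ε : ℝ} (hε : 0 < ε) (hs : ∀ y ∈ s, ε ≤ |x - y|) :
    IntegrableOn (fun y : ℝ => f y / (x - y)) s := by
  obtain ⟨C, hC0, hC⟩ := f_bound f
  have hconst : IntegrableOn (fun _ : ℝ => C / ε) s := by
    simp [integrableOn_const, hfin]
  refine hconst.mono' (meas_kernel f x).aestronglyMeasurable ?_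
  refine (ae_restrict_iff' hsm).2 (Eventually.of_forall fun y hy => ?_)
  rw [Real.norm_eq_abs, abs_div]
  exact div_le_div₀ (hC0.le) (hC y) hε (hs y hy)


lemma cov_left (x a b : ℝ) :
    ∫ y in Ioo (x - b) (x - a), f y / (x - y) = ∫ t in Ioo a b, f (x - t) / t := by
  have h1 := (Measure.measurePreserving_sub_left volume x).setIntegral_image_emb
      (MeasurableEquiv.subLeft x).measurableEmbedding (fun y => f y / (x - y)) (Ioo a b)
  have himg : (fun t : ℝ => x - t) '' Ioo a b = Ioo (x - b) (x - a) := image_const_sub_Ioo x a b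
  rw [himg] at h1
  rw [h1]
  congr 1
  ext t
  rw [sub_sub_cancel]

lemma cov_right (x a b : ℝ) :
    ∫ y in Ioo (x + a) (x + b), f y / (x - y) = -∫ t in Ioo a b, f (x + t) / t := by
  have h1 := (measurePreserving_add_left volume x).setIntegral_image_emb
      (MeasurableEquiv.addLeft x).measurableEmbedding (fun y => f y / (x - y)) (Ioo a b)
  have himg : (fun t : ℝ => x + t) '' Ioo a b = Ioo (x + a) (x + b) := image_const_add_Ioo x a b
  rw [himg] at h1
  rw [h1, ← integral_neg]
  congr 1
  ext t
  rw [show x - (x + t) = -t by ring, div_neg]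

lemma inner_integrand_bound (x : ℝ) {C : ℝ} (hC0 : 0 ≤ C)
    (hC : ∀ u ∈ Icc (x - 1) (x + 1), |deriv f u| ≤ C) :
    ∀ t ∈ Ioo (0:ℝ) 1, ‖(f (x - t) - f (x + t)) / t‖ ≤ 2 * C := by
  intro t ht
  obtain ⟨ht0, ht1⟩ := ht
  have hmem1 : x + t ∈ Icc (x - 1) (x + 1) := ⟨by linarith, by linarith⟩
  have hmem2 : x - t ∈ Icc (x - 1) (x + 1) := ⟨by linarith, by linarith⟩
  have hmvt : ‖f (x - t) - f (x + t)‖ ≤ C * ‖(x - t) - (x + t)‖ :=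
    (convex_Icc (x - 1) (x + 1)).norm_image_sub_le_of_norm_deriv_le
      (fun u _ => f.differentiableAt) (fun u hu => hC u hu) hmem1 hmem2
  have hnorm : ‖(x - t) - (x + t)‖ = 2 * t := by
    rw [Real.norm_eq_abs, show x - t - (x + t) = -(2 * t) by ring, abs_neg,
      abs_of_nonneg (by linarith)]
  rw [hnorm] at hmvt
  rw [norm_div, Real.norm_eq_abs t, abs_of_pos ht0, div_le_iff₀ ht0]
  calc ‖f (x - t) - f (x + t)‖ ≤ C * (2 * t) := hmvt
    _ = 2 * C * t := by ring

lemma inner_integrable (x : ℝ) {s : Set ℝ} (hsm : MeasurableSet s) (hs : s ⊆ Ioo 0 1) :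
    IntegrableOn (fun t : ℝ => (f (x - t) - f (x + t)) / t) s := by
  obtain ⟨C, hC0, hC⟩ := deriv_bound f
  have hmeas : Measurable (fun t : ℝ => (f (x - t) - f (x + t)) / t) :=
    ((f.continuous.comp (continuous_const.sub continuous_id)).sub
      (f.continuous.comp (continuous_const.add continuous_id))).measurable.div measurable_id
  have hfin : volume s < ∞ := lt_of_le_of_lt (measure_mono hs) (by simp)
  have hconst : IntegrableOn (fun _ : ℝ => 2 * C) s := by
    exact integrableOn_const hfin.ne
  refine hconst.mono' hmeas.aestronglyMeasurable ?_
  refine (ae_restrict_iff' hsm).2 (Eventually.of_forall fun t ht => ?_)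
  exact inner_integrand_bound f x hC0.le (fun u _ => hC u) t (hs ht)

lemma set_split (x ε : ℝ) (hε0 : 0 < ε) (hε1 : ε < 1) :
    {y : ℝ | ε < |y - x|} =
      (Ioo (x - 1) (x - ε) ∪ Ioo (x + ε) (x + 1)) ∪ {y : ℝ | 1 ≤ |y - x|} := by
  ext y
  simp only [mem_setOf_eq, mem_union, mem_Ioo]
  constructor
  · intro h
    rcases lt_or_ge (|y - x|) 1 with h1 | h1
    · rcases le_or_gt x y with h2 | h2
      · rw [abs_of_nonneg (by linarith)] at h h1
        exact Or.inl (Or.inr ⟨by linarith, by linarith⟩)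
      · rw [abs_of_neg (by linarith)] at h h1
        exact Or.inl (Or.inl ⟨by linarith, by linarith⟩)
    · exact Or.inr h1
  · rintro ((⟨h1, h2⟩ | ⟨h1, h2⟩) | h1)
    · rw [abs_of_neg (by linarith)]; linarith
    · rw [abs_of_nonneg (by linarith)]; linarith
    · linarith [le_abs_self (y - x), abs_nonneg (y - x)]

lemma pv_split (x ε : ℝ) (hε0 : 0 < ε) (hε1 : ε < 1) :
    ∫ y in {y : ℝ | ε < |y - x|}, f y / (x - y) =
      (∫ t in Ioo ε 1, (f (x - t) - f (x + t)) / t) +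
        ∫ y in {y : ℝ | 1 ≤ |y - x|}, f y / (x - y) := by
  have hintL : IntegrableOn (fun y : ℝ => f y / (x - y)) (Ioo (x - 1) (x - ε)) := by
    refine kernel_intOn f measurableSet_Ioo (by simp) hε0 (fun y hy => ?_)
    obtain ⟨h1, h2⟩ := hy
    rw [abs_of_nonneg (by linarith)]; linarith
  have hintR : IntegrableOn (fun y : ℝ => f y / (x - y)) (Ioo (x + ε) (x + 1)) := by
    refine kernel_intOn f measurableSet_Ioo (by simp) hε0 (fun y hy => ?_)
    obtain ⟨h1, h2⟩ := hy
    rw [abs_of_nonpos (by linarith)]; linarith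
  have hdisj1 : Disjoint (Ioo (x - 1) (x - ε)) (Ioo (x + ε) (x + 1)) := by
    refine Set.disjoint_left.2 fun y hy1 hy2 => ?_
    obtain ⟨a1, a2⟩ := hy1; obtain ⟨b1, b2⟩ := hy2; linarith
  have hdisj2 : Disjoint (Ioo (x - 1) (x - ε) ∪ Ioo (x + ε) (x + 1))
      {y : ℝ | 1 ≤ |y - x|} := by
    refine Set.disjoint_left.2 fun y hy1 hy2 => ?_
    have h1 : (1:ℝ) ≤ |y - x| := hy2
    rcases le_abs.1 h1 with h2 | h2 <;>
      rcases hy1 with ⟨a1, a2⟩ | ⟨a1, a2⟩ <;> linarith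
  rw [set_split x ε hε0 hε1,
    setIntegral_union hdisj2 (measS x) (hintL.union hintR) (outer_integrable f x),
    setIntegral_union hdisj1 measurableSet_Ioo hintL hintR,
    cov_left f x ε 1, cov_right f x ε 1]
  obtain ⟨C, hC0, hC⟩ := f_bound f
  have hconst : IntegrableOn (fun _ : ℝ => C / ε) (Ioo ε 1) := by
    simp [integrableOn_const]
  have habs : ∀ t : ℝ, t ∈ Ioo ε 1 → |t| = t := fun t ht => abs_of_pos (lt_trans hε0 ht.1)
  have hiL : IntegrableOn (fun t : ℝ => f (x - t) / t) (Ioo ε 1) := by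
    refine hconst.mono' ((f.continuous.comp
      (continuous_const.sub continuous_id)).measurable.div measurable_id).aestronglyMeasurable ?_
    refine (ae_restrict_iff' measurableSet_Ioo).2 (Eventually.of_forall fun t ht => ?_)
    rw [Real.norm_eq_abs, abs_div, habs t ht]
    exact div_le_div₀ hC0.le (hC _) hε0 ht.1.le
  have hiR : IntegrableOn (fun t : ℝ => f (x + t) / t) (Ioo ε 1) := by
    refine hconst.mono' ((f.continuous.comp
      (continuous_const.add continuous_id)).measurable.div measurable_id).aestronglyMeasurable ?_
    refine (ae_restrict_iff' measurableSet_Ioo).2 (Eventually.of_forall fun t ht => ?_)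
    rw [Real.norm_eq_abs, abs_div, habs t ht]
    exact div_le_div₀ hC0.le (hC _) hε0 ht.1.le
  rw [← sub_eq_add_neg, ← integral_sub hiL hiR]
  congr 1
  exact setIntegral_congr_fun measurableSet_Ioo fun t _ => (sub_div (f (x - t)) (f (x + t)) t).symm


lemma tendsto_pv (x : ℝ) :
    Tendsto (fun ε : ℝ => ∫ y in {y : ℝ | ε < |y - x|}, f y / (x - y))
      (𝓝[>] 0) (𝓝 (pv f x)) := by
  set g : ℝ → ℝ := fun t => (f (x - t) - f (x + t)) / t with hg
  obtain ⟨C, hC0, hC⟩ := deriv_bound f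
  have hev : ∀ᶠ ε in 𝓝[>] (0:ℝ), ε ∈ Ioo (0:ℝ) 1 :=
    Ioo_mem_nhdsGT_of_mem ⟨le_refl 0, zero_lt_one⟩
  have key : ∀ ε ∈ Ioo (0:ℝ) 1,
      (∫ t in Ioo (0:ℝ) 1, g t) = (∫ t in Ioc 0 ε, g t) + ∫ t in Ioo ε 1, g t := by
    intro ε hε
    have hset : Ioc (0:ℝ) ε ∪ Ioo ε 1 = Ioo 0 1 := by
      ext t
      simp only [mem_union, mem_Ioc, mem_Ioo]
      constructor
      · rintro (⟨h1, h2⟩ | ⟨h1, h2⟩)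
        · exact ⟨h1, lt_of_le_of_lt h2 hε.2⟩
        · exact ⟨lt_trans hε.1 h1, h2⟩
      · rintro ⟨h1, h2⟩
        rcases le_or_gt t ε with h3 | h3
        · exact Or.inl ⟨h1, h3⟩
        · exact Or.inr ⟨h3, h2⟩
    rw [← hset, setIntegral_union (by
        refine Set.disjoint_left.2 fun t ht1 ht2 => ?_
        exact absurd ht2.1 (not_lt.2 ht1.2)) measurableSet_Ioo
      (inner_integrable f x measurableSet_Ioc (fun t ht => ⟨ht.1, lt_of_le_of_lt ht.2 hε.2⟩))
      (inner_integrable f x measurableSet_Ioo (fun t ht => ⟨lt_trans hε.1 ht.1, ht.2⟩))]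
  have hsmall : Tendsto (fun ε : ℝ => ∫ t in Ioc (0:ℝ) ε, g t) (𝓝[>] 0) (𝓝 0) := by
    apply squeeze_zero_norm' (a := fun ε : ℝ => 2 * C * ε)
    · filter_upwards [hev] with ε hε
      have hb : ∀ t ∈ Ioc (0:ℝ) ε, ‖g t‖ ≤ 2 * C := fun t ht =>
        inner_integrand_bound f x hC0.le (fun u _ => hC u) t
          ⟨ht.1, lt_of_le_of_lt ht.2 hε.2⟩
      have := norm_setIntegral_le_of_norm_le_const (C := 2 * C)
        (by simp : volume (Ioc (0:ℝ) ε) < ∞) hb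
      rwa [measureReal_def, Real.volume_Ioc, sub_zero, ENNReal.toReal_ofReal hε.1.le] at this
    · have h2 : Tendsto (fun ε : ℝ => 2 * C * ε) (𝓝 0) (𝓝 (2 * C * 0)) :=
        (continuous_const.mul continuous_id).tendsto 0
      rw [mul_zero] at h2
      exact h2.mono_left nhdsWithin_le_nhds
  have hmain : Tendsto (fun ε : ℝ => ∫ t in Ioo ε 1, g t) (𝓝[>] 0)
      (𝓝 (∫ t in Ioo (0:ℝ) 1, g t)) := by
    have h1 : Tendsto (fun ε : ℝ => (∫ t in Ioo (0:ℝ) 1, g t) - ∫ t in Ioc 0 ε, g t)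
        (𝓝[>] 0) (𝓝 (∫ t in Ioo (0:ℝ) 1, g t)) := by
      simpa using tendsto_const_nhds.sub hsmall
    refine h1.congr' ?_
    filter_upwards [hev] with ε hε
    rw [key ε hε]; ring
  have := hmain.add_const (∫ y in {y : ℝ | 1 ≤ |y - x|}, f y / (x - y))
  rw [show (∫ t in Ioo (0:ℝ) 1, g t) + (∫ y in {y : ℝ | 1 ≤ |y - x|}, f y / (x - y)) = pv f x
    from rfl] at this
  refine this.congr' ?_
  filter_upwards [hev] with ε hε
  exact (pv_split f x ε hε.1 hε.2).symm


lemma tendsto_mul_pv (l : Filter ℝ) [l.IsCountablyGenerated]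
    (hl : Tendsto (fun x : ℝ => |x|) l atTop) :
    Tendsto (fun x : ℝ => x * pv f x) l (𝓝 (∫ y : ℝ, f y)) := by
  obtain ⟨C₂, hC₂0, hC₂⟩ := (SchwartzMap.derivCLM ℝ ℝ f).decay 2 0
  have hC₂' : ∀ u : ℝ, |u| ^ 2 * |deriv f u| ≤ C₂ := by
    intro u
    have := hC₂ u
    simpa [norm_iteratedFDeriv_zero, SchwartzMap.derivCLM_apply, Real.norm_eq_abs] using this
  -- Part (a): `x * (inner integral) → 0`
  have ha : Tendsto (fun x : ℝ => x * ∫ t in Ioo (0:ℝ) 1, (f (x - t) - f (x + t)) / t)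
      l (𝓝 0) := by
    apply squeeze_zero_norm' (a := fun x : ℝ => 8 * C₂ / |x|)
    · filter_upwards [hl.eventually_ge_atTop 2] with x hx
      have hx0 : (0:ℝ) < |x| := by linarith
      have hd : ∀ u ∈ Icc (x - 1) (x + 1), |deriv f u| ≤ 4 * C₂ / x ^ 2 := by
        intro u hu
        have h1 : |u| ^ 2 * |deriv f u| ≤ C₂ := hC₂' u
        have h2 : |x| - |u| ≤ |x - u| := abs_sub_abs_le_abs_sub x u
        have h3 : |x - u| ≤ 1 := by
          rw [abs_le]
          constructor
          · linarith [hu.2]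
          · linarith [hu.1]
        have h4 : |x| / 2 ≤ |u| := by linarith
        have hxne : x ≠ 0 := abs_pos.mp hx0
        rw [le_div_iff₀ (pow_two_pos_of_ne_zero hxne)]
        have hx2 : x ^ 2 = |x| ^ 2 := (sq_abs x).symm
        have h5 : (|x| / 2) ^ 2 ≤ |u| ^ 2 := pow_le_pow_left₀ (by positivity) h4 2
        nlinarith [mul_le_mul_of_nonneg_left h5 (abs_nonneg (deriv f u)), h1, hx2,
          abs_nonneg (deriv f u)]
      have hbd := inner_integrand_bound f x (by positivity) hd
      have hnorm := norm_setIntegral_le_of_norm_le_const (C := 2 * (4 * C₂ / x ^ 2))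
        (by simp : volume (Ioo (0:ℝ) 1) < ∞) hbd
      rw [measureReal_def, Real.volume_Ioo] at hnorm
      simp only [sub_zero, ENNReal.toReal_ofReal zero_le_one, mul_one] at hnorm
      rw [norm_mul, Real.norm_eq_abs]
      calc |x| * ‖∫ t in Ioo (0:ℝ) 1, (f (x - t) - f (x + t)) / t‖
          ≤ |x| * (2 * (4 * C₂ / x ^ 2)) := mul_le_mul_of_nonneg_left hnorm hx0.le
        _ = 8 * C₂ / |x| := by
            have hxne : x ≠ 0 := abs_pos.mp hx0
            field_simp [hxne, hx0.ne']
            linear_combination 8 * sq_abs x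
    · exact tendsto_const_nhds.div_atTop hl
  -- integrability of `|y| * |f y|`
  have hyint : Integrable (fun y : ℝ => |y| * |f y|) := by
    have := f.integrable_pow_mul (μ := volume) 1
    simpa [Real.norm_eq_abs] using this
  -- Part (b): `x * (outer integral) → ∫ f`
  have hb : Tendsto (fun x : ℝ => x * ∫ y in {y : ℝ | 1 ≤ |y - x|}, f y / (x - y)) l
      (𝓝 (∫ y : ℝ, f y)) := by
    have hint2 : ∀ x : ℝ,
        IntegrableOn (fun y : ℝ => y * (f y / (x - y))) {y : ℝ | 1 ≤ |y - x|} := by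
      intro x
      refine hyint.restrict.mono'
        ((measurable_id.mul (meas_kernel f x)).aestronglyMeasurable) ?_
      refine (ae_restrict_iff' (measS x)).2 (Eventually.of_forall fun y hy => ?_)
      have h1 : (1:ℝ) ≤ |x - y| := by rw [abs_sub_comm]; exact hy
      rw [Real.norm_eq_abs, abs_mul, abs_div]
      have h2 : |f y| / |x - y| ≤ |f y| := div_le_self (abs_nonneg _) h1
      exact mul_le_mul_of_nonneg_left h2 (abs_nonneg y)
    have heq : ∀ x : ℝ, x * ∫ y in {y : ℝ | 1 ≤ |y - x|}, f y / (x - y) =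
        (∫ y in {y : ℝ | 1 ≤ |y - x|}, f y) +
          ∫ y in {y : ℝ | 1 ≤ |y - x|}, y * (f y / (x - y)) := by
      intro x
      rw [← integral_const_mul, ← integral_add (f.integrable.restrict) (hint2 x)]
      refine setIntegral_congr_fun (measS x) fun y hy => ?_
      have h1 : (1:ℝ) ≤ |y - x| := hy
      have hne : x - y ≠ 0 := by
        intro h
        rw [show y - x = -(x - y) by ring, h] at h1
        norm_num at h1
      field_simp
      ring
    have T1 : Tendsto (fun x : ℝ => ∫ y in {y : ℝ | 1 ≤ |y - x|}, f y) l
        (𝓝 (∫ y : ℝ, f y)) := by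
      have hrw : ∀ x : ℝ, (∫ y in {y : ℝ | 1 ≤ |y - x|}, f y)
          = ∫ y : ℝ, Set.indicator {y : ℝ | 1 ≤ |y - x|} (fun y => f y) y :=
        fun x => (integral_indicator (measS x)).symm
      simp_rw [hrw]
      apply tendsto_integral_filter_of_dominated_convergence (fun y => ‖f y‖)
      · exact Eventually.of_forall fun x =>
          (f.continuous.measurable.indicator (measS x)).aestronglyMeasurable
      · exact Eventually.of_forall fun x => Eventually.of_forall fun y =>
          norm_indicator_le_norm_self _ _
      · exact f.integrable.norm
      · refine Eventually.of_forall fun y => ?_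
        refine Tendsto.congr' ?_ tendsto_const_nhds
        filter_upwards [hl.eventually_ge_atTop (|y| + 1)] with x hx
        have h2 : |x| - |y| ≤ |x - y| := abs_sub_abs_le_abs_sub x y
        have hmem : y ∈ {y : ℝ | 1 ≤ |y - x|} := by
          simp only [mem_setOf_eq]
          rw [abs_sub_comm]
          linarith
        exact (indicator_of_mem hmem (fun y => f y)).symm
    have T2 : Tendsto (fun x : ℝ => ∫ y in {y : ℝ | 1 ≤ |y - x|}, y * (f y / (x - y))) l
        (𝓝 0) := by
      have hrw : ∀ x : ℝ, (∫ y in {y : ℝ | 1 ≤ |y - x|}, y * (f y / (x - y)))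
          = ∫ y : ℝ, Set.indicator {y : ℝ | 1 ≤ |y - x|}
              (fun y => y * (f y / (x - y))) y :=
        fun x => (integral_indicator (measS x)).symm
      simp_rw [hrw]
      have key := tendsto_integral_filter_of_dominated_convergence (μ := volume) (l := l)
        (F := fun x y => Set.indicator {y : ℝ | 1 ≤ |y - x|}
          (fun y => y * (f y / (x - y))) y)
        (f := fun _ => (0:ℝ)) (bound := fun y => |y| * |f y|) ?_ ?_ ?_ ?_
      · simpa using key
      · exact Eventually.of_forall fun x =>
          ((measurable_id.mul (meas_kernel f x)).indicator (measS x)).aestronglyMeasurable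
      · refine Eventually.of_forall fun x => Eventually.of_forall fun y => ?_
        simp only [indicator_apply]
        split_ifs with hy
        · have h1 : (1:ℝ) ≤ |x - y| := by rw [abs_sub_comm]; exact hy
          rw [Real.norm_eq_abs, abs_mul, abs_div]
          have h2 : |f y| / |x - y| ≤ |f y| := div_le_self (abs_nonneg _) h1
          exact mul_le_mul_of_nonneg_left h2 (abs_nonneg y)
        · simp only [norm_zero]
          positivity
      · exact hyint
      · refine Eventually.of_forall fun y => ?_
        apply squeeze_zero_norm' (a := fun x : ℝ => (|y| * |f y|) / |x - y|)
        · filter_upwards [hl.eventually_ge_atTop (|y| + 1)] with x hx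
          have h2 : |x| - |y| ≤ |x - y| := abs_sub_abs_le_abs_sub x y
          have hmem : y ∈ {y : ℝ | 1 ≤ |y - x|} := by
            simp only [mem_setOf_eq]
            rw [abs_sub_comm]
            linarith
          simp only [indicator_apply, if_pos hmem]
          rw [Real.norm_eq_abs, abs_mul, abs_div]
          exact le_of_eq (by ring)
        · apply tendsto_const_nhds.div_atTop
          apply tendsto_atTop_mono (fun x : ℝ => abs_sub_abs_le_abs_sub x y)
          simpa [sub_eq_add_neg] using tendsto_atTop_add_const_right l (-|y|) hl
    have hsum := T1.add T2
    rw [add_zero] at hsum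
    exact hsum.congr fun x => (heq x).symm
  have hfin := ha.add hb
  rw [zero_add] at hfin
  refine hfin.congr fun x => ?_
  simp only [pv, mul_add]

end PVSchwartz

/-- For a Schwartz function `f : ℝ → ℝ`, the principal value
`h(x) = PV∫_ℝ f(y)/(x−y) dy` exists for every `x`, and `x·h(x) → ∫_ℝ f(y) dy` both
as `x → +∞` and as `x → −∞`: the Hilbert transform of a Schwartz function decays
only like `1/|x|` at infinity whenever `∫_ℝ f ≠ 0`. -/
theorem pv_schwartz_decay (f : SchwartzMap ℝ ℝ) :
    ∃ h : ℝ → ℝ,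
      (∀ x : ℝ,
        Tendsto
          (fun ε : ℝ => ∫ y in {y : ℝ | ε < |y - x|}, f y / (x - y))
          (𝓝[>] 0) (𝓝 (h x)))
      ∧ Tendsto (fun x : ℝ => x * h x) atTop (𝓝 (∫ y : ℝ, f y))
      ∧ Tendsto (fun x : ℝ => x * h x) atBot (𝓝 (∫ y : ℝ, f y)) :=
  ⟨PVSchwartz.pv f, PVSchwartz.tendsto_pv f,
    PVSchwartz.tendsto_mul_pv f atTop tendsto_abs_atTop_atTop,
    PVSchwartz.tendsto_mul_pv f atBot tendsto_abs_atBot_atTop⟩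
end

section
/- Let f : ℝ → ℝ be a Schwartz function with ∫_ℝ f(y) dy ≠ 0, and for x ∈ ℝ let h(x) := PV∫_ℝ f(y)/(x−y) dy (which exists for every x). Then h is not Lebesgue integrable on ℝ; in particular, the Hilbert transform of a Schwartz function with nonzero mean is never rapidly decreasing. -/
open MeasureTheory Filter Set Topology

namespace PV17


noncomputable def g (f : SchwartzMap ℝ ℝ) (x t : ℝ) : ℝ := (f (x - t) - f (x + t)) / t

lemma exists_bounds (f : SchwartzMap ℝ ℝ) :
    ∃ D : ℝ, 0 < D ∧ (∀ u : ℝ, |u * f u| * (1 + u ^ 2) ≤ D) ∧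
      (∀ u : ℝ, ‖fderiv ℝ f u‖ ≤ D) ∧ (∀ u : ℝ, |u| ^ 3 * ‖fderiv ℝ f u‖ ≤ D) ∧
      (∀ u : ℝ, |f u| ≤ D) := by
  have hd1 : ∀ x : ℝ, ‖iteratedFDeriv ℝ 1 (f : ℝ → ℝ) x‖ = ‖fderiv ℝ f x‖ := by
    intro x; rw [← norm_iteratedFDeriv_fderiv, norm_iteratedFDeriv_zero]
  obtain ⟨C1, hC1p, hC1⟩ := f.decay 1 0
  obtain ⟨C3, hC3p, hC3⟩ := f.decay 3 0
  obtain ⟨M1, hM1p, hM1⟩ := f.decay 0 1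
  obtain ⟨M3, hM3p, hM3⟩ := f.decay 3 1
  simp only [norm_iteratedFDeriv_zero, pow_zero, one_mul, hd1, Real.norm_eq_abs] at hC1 hC3 hM1 hM3
  obtain ⟨C0, hC0p, hC0⟩ := f.decay 0 0
  simp only [norm_iteratedFDeriv_zero, pow_zero, one_mul, Real.norm_eq_abs] at hC0
  refine ⟨C1 + C3 + M1 + M3 + C0, by positivity, ?_, ?_, ?_, ?_⟩
  · intro u
    have h1 := hC1 u
    have h3 := hC3 u
    have : |u * f u| * (1 + u ^ 2) = |u| * |f u| + |u| ^ 3 * |f u| := by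
      rw [abs_mul, ← sq_abs u]; ring
    nlinarith [abs_nonneg (f u), abs_nonneg u, hM1 u, hM3 u, hC0 u,
      mul_nonneg (pow_nonneg (abs_nonneg u) 3) (norm_nonneg (fderiv ℝ f u)),
      norm_nonneg (fderiv ℝ f u)]
  · intro u
    nlinarith [hM1 u, hC1 u, hC3 u, hM3 u, hC0 u, abs_nonneg (f u), abs_nonneg u,
      mul_nonneg (abs_nonneg u) (abs_nonneg (f u)),
      mul_nonneg (pow_nonneg (abs_nonneg u) 3) (abs_nonneg (f u)),
      mul_nonneg (pow_nonneg (abs_nonneg u) 3) (norm_nonneg (fderiv ℝ f u))]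
  · intro u
    nlinarith [hM1 u, hC1 u, hC3 u, hM3 u, hC0 u, abs_nonneg (f u), abs_nonneg u,
      mul_nonneg (abs_nonneg u) (abs_nonneg (f u)),
      mul_nonneg (pow_nonneg (abs_nonneg u) 3) (abs_nonneg (f u)),
      norm_nonneg (fderiv ℝ f u)]
  · intro u
    nlinarith [hM1 u, hC1 u, hC3 u, hM3 u, hC0 u, abs_nonneg u,
      mul_nonneg (abs_nonneg u) (abs_nonneg (f u)),
      mul_nonneg (pow_nonneg (abs_nonneg u) 3) (abs_nonneg (f u)),
      mul_nonneg (pow_nonneg (abs_nonneg u) 3) (norm_nonneg (fderiv ℝ f u)),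
      norm_nonneg (fderiv ℝ f u)]

/-- Mean value bound. -/
lemma mvt_bound (f : SchwartzMap ℝ ℝ) {C : ℝ} {a b : ℝ} (hab : a ≤ b)
    (hC : ∀ u ∈ Icc a b, ‖fderiv ℝ f u‖ ≤ C) :
    |f b - f a| ≤ C * (b - a) := by
  have := Convex.norm_image_sub_le_of_norm_fderiv_le
    (f := (f : ℝ → ℝ)) (fun u _ => f.differentiable.differentiableAt) hC
    (convex_Icc a b) (left_mem_Icc.2 hab) (right_mem_Icc.2 hab)
  simpa [Real.norm_eq_abs, abs_of_nonneg (sub_nonneg.2 hab)] using this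



variable (f : SchwartzMap ℝ ℝ)

lemma meas_sub (x : ℝ) : Measurable (fun t => (f (x - t) : ℝ)) :=
  f.continuous.measurable.comp (measurable_const.sub measurable_id)

lemma meas_add (x : ℝ) : Measurable (fun t => (f (x + t) : ℝ)) :=
  f.continuous.measurable.comp (measurable_const.add measurable_id)

lemma measurable_g (x : ℝ) : Measurable (g f x) :=
  ((meas_sub f x).sub (meas_add f x)).div measurable_id

lemma integrableOn_sub_div {ε : ℝ} (hε : 0 < ε) (x : ℝ) {s : Set ℝ}
    (hs : MeasurableSet s) (h : ∀ t ∈ s, ε ≤ |t|) :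
    IntegrableOn (fun t => f (x - t) / t) s := by
  refine Integrable.mono' (((f.integrable.norm.comp_sub_left x).const_mul ε⁻¹).integrableOn)
    (((meas_sub f x).div measurable_id).aestronglyMeasurable) ?_
  filter_upwards [ae_restrict_mem hs] with t ht
  rcases eq_or_ne t 0 with rfl | ht0
  · simpa using absurd (h 0 ht) (by simp [hε.not_ge])
  · rw [Real.norm_eq_abs, abs_div]
    rw [div_le_iff₀ (abs_pos.2 ht0)]
    calc |f (x - t)| = 1 * |f (x - t)| := (one_mul _).symm
    _ ≤ (ε⁻¹ * |t|) * |f (x - t)| := by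
        gcongr
        rw [← inv_mul_cancel₀ hε.ne']
        gcongr
        exact h t ht
    _ = ε⁻¹ * ‖f (x - t)‖ * |t| := by rw [Real.norm_eq_abs]; ring
  
lemma integrableOn_add_div {ε : ℝ} (hε : 0 < ε) (x : ℝ) {s : Set ℝ}
    (hs : MeasurableSet s) (h : ∀ t ∈ s, ε ≤ |t|) :
    IntegrableOn (fun t => f (x + t) / t) s := by
  refine Integrable.mono' (((f.integrable.norm.comp_add_left x).const_mul ε⁻¹).integrableOn)
    (((meas_add f x).div measurable_id).aestronglyMeasurable) ?_
  filter_upwards [ae_restrict_mem hs] with t ht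
  rcases eq_or_ne t 0 with rfl | ht0
  · simpa using absurd (h 0 ht) (by simp [hε.not_ge])
  · rw [Real.norm_eq_abs, abs_div]
    rw [div_le_iff₀ (abs_pos.2 ht0)]
    calc |f (x + t)| = 1 * |f (x + t)| := (one_mul _).symm
    _ ≤ (ε⁻¹ * |t|) * |f (x + t)| := by
        gcongr
        rw [← inv_mul_cancel₀ hε.ne']
        gcongr
        exact h t ht
    _ = ε⁻¹ * ‖f (x + t)‖ * |t| := by rw [Real.norm_eq_abs]; ring

lemma g_bound_of_fderiv {D : ℝ} (hD : ∀ u : ℝ, ‖fderiv ℝ f u‖ ≤ D)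
    {x t : ℝ} (ht : 0 < t) : |g f x t| ≤ 2 * D := by
  have hab : x - t ≤ x + t := by linarith
  have hmvt : |f (x + t) - f (x - t)| ≤ D * ((x + t) - (x - t)) := by
    have := Convex.norm_image_sub_le_of_norm_fderiv_le
      (f := (f : ℝ → ℝ)) (fun u _ => f.differentiable.differentiableAt)
      (fun u _ => hD u) (convex_Icc (x - t) (x + t))
      (left_mem_Icc.2 hab) (right_mem_Icc.2 hab)
    rw [Real.norm_eq_abs, Real.norm_eq_abs, abs_of_nonneg (sub_nonneg.2 hab)] at this
    exact this
  have h2 : |f (x - t) - f (x + t)| ≤ D * (2 * t) := by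
    rw [abs_sub_comm]; convert hmvt using 2; ring
  rw [g, abs_div, abs_of_pos ht, div_le_iff₀ ht]
  calc |f (x - t) - f (x + t)| ≤ D * (2 * t) := h2
  _ = 2 * D * t := by ring

lemma integrableOn_g {D : ℝ} (hD : ∀ u : ℝ, ‖fderiv ℝ f u‖ ≤ D) (x : ℝ) :
    IntegrableOn (g f x) (Ioi 0) := by
  have h1 : IntegrableOn (g f x) (Ioc 0 1) := by
    refine Measure.integrableOn_of_bounded (M := 2 * D) (by simp)
      (measurable_g f x).aestronglyMeasurable ?_
    filter_upwards [ae_restrict_mem measurableSet_Ioc] with t ht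
    exact (Real.norm_eq_abs _) ▸ g_bound_of_fderiv f hD ht.1
  have h2 : IntegrableOn (g f x) (Ioi 1) := by
    refine Integrable.mono' (((f.integrable.norm.comp_sub_left x).add
      (f.integrable.norm.comp_add_left x)).integrableOn)
      (measurable_g f x).aestronglyMeasurable ?_
    filter_upwards [ae_restrict_mem measurableSet_Ioi] with t ht
    have ht1 : (1:ℝ) ≤ t := le_of_lt ht
    have ht0 : (0:ℝ) < t := lt_of_lt_of_le one_pos ht1
    rw [Real.norm_eq_abs, g, abs_div, abs_of_pos ht0, div_le_iff₀ ht0]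
    calc |f (x - t) - f (x + t)| ≤ |f (x - t)| + |f (x + t)| := abs_sub _ _
    _ = (‖f (x - t)‖ + ‖f (x + t)‖) * 1 := by simp [Real.norm_eq_abs]
    _ ≤ (‖f (x - t)‖ + ‖f (x + t)‖) * t :=
        mul_le_mul_of_nonneg_left ht1 (add_nonneg (norm_nonneg _) (norm_nonneg _))
  have : Ioc (0:ℝ) 1 ∪ Ioi 1 = Ioi 0 := Ioc_union_Ioi_eq_Ioi zero_le_one
  rw [← this]
  exact h1.union h2



lemma shift_Ioi (φ : ℝ → ℝ) (x a : ℝ) :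
    ∫ t in Ioi a, φ (x + t) = ∫ u in Ioi (x + a), φ u := by
  rw [← integral_indicator measurableSet_Ioi, ← integral_indicator measurableSet_Ioi,
    ← integral_add_left_eq_self ((Ioi (x + a)).indicator φ) x]
  congr 1
  funext t
  by_cases ht : a < t
  · rw [Set.indicator_of_mem (by simpa using ht), Set.indicator_of_mem
      (by simp only [mem_Ioi]; linarith)]
  · rw [Set.indicator_of_notMem (by simpa using ht), Set.indicator_of_notMem
      (by simp only [mem_Ioi]; intro h; exact ht (by linarith))]

lemma shift_Iic (φ : ℝ → ℝ) (x a : ℝ) :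
    ∫ t in Iic a, φ (x + t) = ∫ u in Iic (x + a), φ u := by
  rw [← integral_indicator measurableSet_Iic, ← integral_indicator measurableSet_Iic,
    ← integral_add_left_eq_self ((Iic (x + a)).indicator φ) x]
  congr 1
  funext t
  by_cases ht : t ≤ a
  · rw [Set.indicator_of_mem (by simpa using ht), Set.indicator_of_mem
      (by simp only [mem_Iic]; linarith)]
  · rw [Set.indicator_of_notMem (by simpa using ht), Set.indicator_of_notMem
      (by simp only [mem_Iic]; intro h; exact ht (by linarith))]

lemma tendsto_Iic {φ : ℝ → ℝ} (hφ : Integrable φ) :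
    Tendsto (fun x => ∫ u in Iic x, φ u) atTop (𝓝 (∫ u, φ u)) := by
  have key : Tendsto (fun x => ∫ u, (Iic x).indicator φ u) atTop
      (𝓝 (∫ u, φ u)) := by
    apply tendsto_integral_filter_of_dominated_convergence (fun u => ‖φ u‖)
    · exact Eventually.of_forall fun x =>
        hφ.aestronglyMeasurable.indicator measurableSet_Iic
    · refine Eventually.of_forall fun x => Eventually.of_forall fun u => ?_
      by_cases hu : u ∈ Iic x
      · rw [Set.indicator_of_mem hu]
      · rw [Set.indicator_of_notMem hu]; simp
    · exact hφ.norm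
    · refine Eventually.of_forall fun u => ?_
      have : ∀ᶠ x in atTop, (Iic x).indicator φ u = φ u := by
        filter_upwards [eventually_ge_atTop u] with x hx
        exact Set.indicator_of_mem (mem_Iic.2 hx) _
      exact Tendsto.congr' (this.mono fun x h => h.symm) tendsto_const_nhds
  simpa only [integral_indicator measurableSet_Iic] using key

lemma tendsto_Ioi_zero {φ : ℝ → ℝ} (hφ : Integrable φ) :
    Tendsto (fun x => ∫ u in Ioi x, φ u) atTop (𝓝 0) := by
  have hx : ∀ x : ℝ, ∫ u in Ioi x, φ u = (∫ u, φ u) - ∫ u in Iic x, φ u := by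
    intro x
    have : (∫ u, φ u) = (∫ u in Iic x, φ u) + ∫ u in Ioi x, φ u := by
      rw [← setIntegral_union (Iic_disjoint_Ioi le_rfl) measurableSet_Ioi
        hφ.integrableOn hφ.integrableOn, Iic_union_Ioi, Measure.restrict_univ]
    linarith
  simp only [hx]
  have := (tendsto_const_nhds (x := ∫ u, φ u) (f := atTop (α := ℝ))).sub (tendsto_Iic hφ)
  simpa using this


lemma pv_eq (x : ℝ) {ε : ℝ} (hε : 0 < ε) :
    ∫ y in {y : ℝ | ε < |y - x|}, f y / (x - y) = ∫ t in Ioi ε, g f x t := by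
  have hS : MeasurableSet {y : ℝ | ε < |y - x|} :=
    measurableSet_lt measurable_const ((measurable_id.sub measurable_const).abs)
  have hT : MeasurableSet {t : ℝ | ε < |t|} :=
    measurableSet_lt measurable_const measurable_abs
  have step1 : ∫ y in {y : ℝ | ε < |y - x|}, f y / (x - y)
      = ∫ t in {t : ℝ | ε < |t|}, f (x - t) / t := by
    rw [← integral_indicator hS, ← integral_sub_left_eq_self
      ({y : ℝ | ε < |y - x|}.indicator (fun y => f y / (x - y))) volume x,
      ← integral_indicator hT]
    congr 1
    funext t
    have h1 : |x - t - x| = |t| := by rw [sub_sub_cancel_left, abs_neg]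
    simp only [Set.indicator_apply, mem_setOf_eq, h1, sub_sub_cancel]
  have hTsplit : {t : ℝ | ε < |t|} = Iio (-ε) ∪ Ioi ε := by
    ext t
    simp only [mem_setOf_eq, mem_union, mem_Iio, mem_Ioi, lt_abs]
    constructor
    · rintro (h | h); · exact Or.inr h
      · exact Or.inl (by linarith)
    · rintro (h | h); · exact Or.inr (by linarith)
      · exact Or.inl h
  have hdisj : Disjoint (Iio (-ε)) (Ioi ε) :=
    (Iic_disjoint_Ioi (by linarith : -ε ≤ ε)).mono_left Iio_subset_Iic_self
  have hint1 : IntegrableOn (fun t => f (x - t) / t) (Iio (-ε)) :=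
    integrableOn_sub_div f hε x measurableSet_Iio (fun t ht => by
      rw [abs_of_neg (by simp only [mem_Iio] at ht; linarith)]
      simp only [mem_Iio] at ht; linarith)
  have hint2 : IntegrableOn (fun t => f (x - t) / t) (Ioi ε) :=
    integrableOn_sub_div f hε x measurableSet_Ioi (fun t ht => by
      rw [abs_of_pos (by simp only [mem_Ioi] at ht; linarith)]
      simp only [mem_Ioi] at ht; linarith)
  have hint3 : IntegrableOn (fun t => f (x + t) / t) (Ioi ε) :=
    integrableOn_add_div f hε x measurableSet_Ioi (fun t ht => by
      rw [abs_of_pos (by simp only [mem_Ioi] at ht; linarith)]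
      simp only [mem_Ioi] at ht; linarith)
  have step2 : ∫ t in {t : ℝ | ε < |t|}, f (x - t) / t
      = (∫ t in Iio (-ε), f (x - t) / t) + ∫ t in Ioi ε, f (x - t) / t := by
    rw [hTsplit, setIntegral_union hdisj measurableSet_Ioi hint1 hint2]
  have step3 : ∫ t in Iio (-ε), f (x - t) / t = ∫ t in Ioi ε, -(f (x + t) / t) := by
    rw [show ∫ t in Iio (-ε), f (x - t) / t = ∫ t in Iic (-ε), f (x - t) / t by
      rw [← restrict_Iio_eq_restrict_Iic]]
    rw [← integral_comp_neg_Ioi ε (fun t => f (x - t) / t)]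
    congr 1
    funext t
    rw [sub_neg_eq_add, div_neg]
  have hsplitg : ∫ t in Ioi ε, g f x t
      = (∫ t in Ioi ε, f (x - t) / t) - ∫ t in Ioi ε, f (x + t) / t := by
    rw [← integral_sub hint2 hint3]
    congr 1
    funext t
    simp only [g, sub_div]
  rw [step1, step2, step3, hsplitg, integral_neg]
  ring

lemma tendsto_pv (hg : ∀ x : ℝ, IntegrableOn (g f x) (Ioi 0))
    (hmeas : ∀ x : ℝ, Measurable (g f x)) (x : ℝ) :
    Tendsto (fun ε => ∫ t in Ioi ε, g f x t) (𝓝[>] (0:ℝ))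
      (𝓝 (∫ t in Ioi (0:ℝ), g f x t)) := by
  have key : Tendsto (fun ε => ∫ t, (Ioi ε).indicator (g f x) t) (𝓝[>] (0:ℝ))
      (𝓝 (∫ t, (Ioi (0:ℝ)).indicator (g f x) t)) := by
    apply tendsto_integral_filter_of_dominated_convergence
      ((Ioi (0:ℝ)).indicator (fun t => ‖g f x t‖))
    · exact Eventually.of_forall fun ε =>
        (((hmeas x).indicator measurableSet_Ioi).aestronglyMeasurable)
    · filter_upwards [self_mem_nhdsWithin] with ε (hε : 0 < ε)
      refine Eventually.of_forall fun t => ?_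
      by_cases ht : t ∈ Ioi ε
      · rw [Set.indicator_of_mem ht, Set.indicator_of_mem (by
          simp only [mem_Ioi] at ht ⊢; linarith)]
      · rw [Set.indicator_of_notMem ht]
        simp only [norm_zero]
        exact Set.indicator_apply_nonneg (fun _ => norm_nonneg _)
    · rw [integrable_indicator_iff measurableSet_Ioi]
      exact (hg x).norm
    · refine Eventually.of_forall fun t => ?_
      by_cases ht : 0 < t
      · have : ∀ᶠ ε in 𝓝[>] (0:ℝ), (Ioi ε).indicator (g f x) t = g f x t := by
          filter_upwards [Ioo_mem_nhdsGT_of_mem (left_mem_Ico.2 ht)] with ε hε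
          exact Set.indicator_of_mem (mem_Ioi.2 hε.2) _
        rw [Set.indicator_of_mem (mem_Ioi.2 ht)]
        exact Tendsto.congr' (this.mono fun ε h => h.symm) tendsto_const_nhds
      · have : ∀ᶠ ε in 𝓝[>] (0:ℝ), (Ioi ε).indicator (g f x) t = 0 := by
          filter_upwards [self_mem_nhdsWithin] with ε (hε : 0 < ε)
          exact Set.indicator_of_notMem (by simp only [mem_Ioi]; push_neg at ht ⊢; linarith) _
        rw [Set.indicator_of_notMem (by simpa using ht)]
        exact Tendsto.congr' (this.mono fun ε h => h.symm) tendsto_const_nhds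
  simpa only [integral_indicator measurableSet_Ioi] using key


lemma A_eq (x : ℝ) :
    ∫ t in Ioi (0:ℝ), ((f (x - t) : ℝ) - f (x + t)) =
      (∫ u in Iic x, f u) - ∫ u in Ioi x, f u := by
  have h1 : IntegrableOn (fun t => (f (x - t) : ℝ)) (Ioi 0) :=
    (f.integrable.comp_sub_left x).integrableOn
  have h2 : IntegrableOn (fun t => (f (x + t) : ℝ)) (Ioi 0) :=
    (f.integrable.comp_add_left x).integrableOn
  rw [integral_sub h1 h2]
  congr 1
  · have hcomp := integral_comp_neg_Ioi (0:ℝ) (fun s => (f (x + s) : ℝ))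
    simp only [neg_zero] at hcomp
    have hL : ∫ t in Ioi (0:ℝ), (f (x - t) : ℝ) = ∫ t in Iic (0:ℝ), (f (x + t) : ℝ) := by
      rw [← hcomp]
      simp only [sub_eq_add_neg]
    rw [hL, shift_Iic (fun u => (f u : ℝ)) x 0, add_zero]
  · rw [shift_Ioi (fun u => (f u : ℝ)) x 0, add_zero]

lemma tendsto_xh :
    Tendsto (fun x => x * ∫ t in Ioi (0:ℝ), g f x t) atTop (𝓝 (∫ y, f y)) := by
  obtain ⟨D, hDpos, hD1, hD2, hD3, hD0⟩ := exists_bounds f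
  set b : ℝ → ℝ → ℝ := fun x t => (x - t) / t * (f (x - t) - f (x + t)) with hbdef
  have hg : ∀ x : ℝ, IntegrableOn (g f x) (Ioi 0) := integrableOn_g f hD2
  have hdiffint : ∀ x : ℝ, IntegrableOn (fun t => (f (x - t) : ℝ) - f (x + t)) (Ioi 0) :=
    fun x => ((f.integrable.comp_sub_left x).sub (f.integrable.comp_add_left x)).integrableOn
  have hptws : ∀ x t : ℝ, x * g f x t = ((f (x - t) : ℝ) - f (x + t)) + b x t := by
    intro x t
    rcases eq_or_ne t 0 with rfl | ht
    · simp [g, hbdef]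
    · simp only [g, hbdef]
      field_simp
      ring
  have hbint : ∀ x : ℝ, IntegrableOn (b x) (Ioi 0) := by
    intro x
    have : b x = fun t => x * g f x t - ((f (x - t) : ℝ) - f (x + t)) := by
      funext t
      rw [hptws x t]; ring
    rw [this]
    exact ((hg x).const_mul x).sub (hdiffint x)
  have heq : ∀ x : ℝ, x * ∫ t in Ioi (0:ℝ), g f x t
      = ((∫ u in Iic x, f u) - ∫ u in Ioi x, f u) + ∫ t in Ioi (0:ℝ), b x t := by
    intro x
    rw [← integral_const_mul, ← A_eq f x, ← integral_add (hdiffint x) (hbint x)]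
    congr 1
    funext t
    exact hptws x t
  have hA : Tendsto (fun x => (∫ u in Iic x, f u) - ∫ u in Ioi x, f u) atTop
      (𝓝 (∫ y, f y)) := by
    have := (tendsto_Iic f.integrable).sub (tendsto_Ioi_zero f.integrable)
    simpa using this
  -- the error term
  set β : ℝ → ℝ := fun x => 8 * D / x + 2 * D * Real.pi / x
      + 3 * ∫ u in Ioi (x + x / 2), ‖f u‖ with hβdef
  have hβ : Tendsto β atTop (𝓝 0) := by
    have t1 : Tendsto (fun x : ℝ => 8 * D / x) atTop (𝓝 0) :=
      tendsto_const_nhds.div_atTop tendsto_id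
    have t2 : Tendsto (fun x : ℝ => 2 * D * Real.pi / x) atTop (𝓝 0) :=
      tendsto_const_nhds.div_atTop tendsto_id
    have h15 : Tendsto (fun x : ℝ => x + x / 2) atTop atTop :=
      tendsto_id.atTop_add_atTop (Tendsto.atTop_div_const two_pos tendsto_id)
    have t3 : Tendsto (fun x : ℝ => ∫ u in Ioi (x + x / 2), ‖f u‖) atTop (𝓝 0) :=
      (tendsto_Ioi_zero f.integrable.norm).comp h15
    have := (t1.add t2).add (t3.const_mul 3)
    simpa [hβdef] using this
  have hBbound : ∀ᶠ x in atTop, ‖∫ t in Ioi (0:ℝ), b x t‖ ≤ β x := by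
    filter_upwards [eventually_gt_atTop (0:ℝ)] with x hx
    have hx2 : (0:ℝ) < x / 2 := half_pos hx
    have hsplit : Ioc (0:ℝ) (x / 2) ∪ Ioi (x / 2) = Ioi 0 :=
      Ioc_union_Ioi_eq_Ioi hx2.le
    have hb1 : IntegrableOn (b x) (Ioc 0 (x / 2)) :=
      (hbint x).mono_set (by rw [← hsplit]; exact subset_union_left)
    have hb2 : IntegrableOn (b x) (Ioi (x / 2)) :=
      (hbint x).mono_set (by rw [← hsplit]; exact subset_union_right)
    have hdisj : Disjoint (Ioc (0:ℝ) (x / 2)) (Ioi (x / 2)) :=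
      (Iic_disjoint_Ioi le_rfl).mono_left Ioc_subset_Iic_self
    have hsum : ∫ t in Ioi (0:ℝ), b x t
        = (∫ t in Ioc (0:ℝ) (x / 2), b x t) + ∫ t in Ioi (x / 2), b x t := by
      rw [← hsplit, setIntegral_union hdisj measurableSet_Ioi hb1 hb2]
    -- region 1
    have e1 : ‖∫ t in Ioc (0:ℝ) (x / 2), b x t‖ ≤ 8 * D / x := by
      have key : ∀ t ∈ Ioc (0:ℝ) (x / 2), ‖b x t‖ ≤ 16 * D / x ^ 2 := by
        rintro t ⟨ht0, htx⟩
        have hxt : x / 2 ≤ x - t := by linarith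
        have hder : ∀ u ∈ Icc (x - t) (x + t), ‖fderiv ℝ f u‖ ≤ D / (x / 2) ^ 3 := by
          intro u hu
          have hu2 : x / 2 ≤ u := le_trans hxt hu.1
          have hupos : 0 < u := lt_of_lt_of_le hx2 hu2
          have h3 := hD3 u
          rw [abs_of_pos hupos] at h3
          calc ‖fderiv ℝ f u‖ ≤ D / u ^ 3 := by
                rw [le_div_iff₀ (by positivity)]
                nlinarith [norm_nonneg (fderiv ℝ f u)]
          _ ≤ D / (x / 2) ^ 3 := by
                gcongr
        have hab : x - t ≤ x + t := by linarith
        have hmvt : |f (x + t) - f (x - t)| ≤ (D / (x / 2) ^ 3) * ((x + t) - (x - t)) := by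
          have := Convex.norm_image_sub_le_of_norm_fderiv_le
            (f := (f : ℝ → ℝ)) (fun u _ => f.differentiable.differentiableAt)
            hder (convex_Icc (x - t) (x + t)) (left_mem_Icc.2 hab) (right_mem_Icc.2 hab)
          rw [Real.norm_eq_abs, Real.norm_eq_abs, abs_of_nonneg (sub_nonneg.2 hab)] at this
          exact this
        have hmvt' : |f (x - t) - f (x + t)| ≤ (D / (x / 2) ^ 3) * (2 * t) := by
          rw [abs_sub_comm]
          calc |f (x + t) - f (x - t)| ≤ (D / (x / 2) ^ 3) * ((x + t) - (x - t)) := hmvt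
          _ = (D / (x / 2) ^ 3) * (2 * t) := by ring
        have hbt : ‖b x t‖ = (x - t) / t * |f (x - t) - f (x + t)| := by
          rw [Real.norm_eq_abs, hbdef, abs_mul, abs_div,
            abs_of_nonneg (by linarith : (0:ℝ) ≤ x - t), abs_of_pos ht0]
        rw [hbt]
        calc (x - t) / t * |f (x - t) - f (x + t)|
            ≤ (x - t) / t * ((D / (x / 2) ^ 3) * (2 * t)) := by
              gcongr
              exact div_nonneg (by linarith) ht0.le
        _ ≤ (x / t) * ((D / (x / 2) ^ 3) * (2 * t)) := by
              have hfrac : (x - t) / t ≤ x / t :=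
                (div_le_div_iff_of_pos_right ht0).2 (by linarith)
              exact mul_le_mul_of_nonneg_right hfrac (by positivity)
        _ = 16 * D / x ^ 2 := by
              field_simp
              ring
      calc ‖∫ t in Ioc (0:ℝ) (x / 2), b x t‖
          ≤ (16 * D / x ^ 2) * (volume (Ioc (0:ℝ) (x / 2))).toReal :=
            norm_setIntegral_le_of_norm_le_const measure_Ioc_lt_top key
      _ = (16 * D / x ^ 2) * (x / 2) := by
            rw [Real.volume_Ioc, sub_zero, ENNReal.toReal_ofReal hx2.le]
      _ = 8 * D / x := by field_simp; ring
    -- region 2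
    have i1 : Integrable (fun t : ℝ => (1 + (x - t) ^ 2)⁻¹) := by
      have := integrable_inv_one_add_sq.comp_sub_left x
      simpa using this
    have e2 : ‖∫ t in Ioi (x / 2), b x t‖
        ≤ 2 * D * Real.pi / x + 3 * ∫ u in Ioi (x + x / 2), ‖f u‖ := by
      set bnd : ℝ → ℝ := fun t => 2 * D / x * (1 + (x - t) ^ 2)⁻¹ + 3 * ‖f (x + t)‖
        with hbnddef
      have hbndint : IntegrableOn bnd (Ioi (x / 2)) :=
        ((i1.const_mul (2 * D / x)).add
          ((f.integrable.norm.comp_add_left x).const_mul 3)).integrableOn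
      have hptw : ∀ᵐ t ∂(volume.restrict (Ioi (x / 2))), ‖b x t‖ ≤ bnd t := by
        filter_upwards [ae_restrict_mem measurableSet_Ioi] with t ht
        rw [mem_Ioi] at ht
        have ht0 : 0 < t := lt_trans hx2 ht
        have habs : ‖b x t‖ ≤ |x - t| * |f (x - t)| / t + |x - t| * |f (x + t)| / t := by
          rw [Real.norm_eq_abs, hbdef, abs_mul, abs_div, abs_of_pos ht0]
          calc |x - t| / t * |f (x - t) - f (x + t)|
              ≤ |x - t| / t * (|f (x - t)| + |f (x + t)|) :=
                mul_le_mul_of_nonneg_left (abs_sub _ _)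
                  (div_nonneg (abs_nonneg _) ht0.le)
          _ = |x - t| * |f (x - t)| / t + |x - t| * |f (x + t)| / t := by ring
        have bound1 : |x - t| * |f (x - t)| / t ≤ 2 * D / x * (1 + (x - t) ^ 2)⁻¹ := by
          have h1 : |x - t| * |f (x - t)| = |(x - t) * f (x - t)| := (abs_mul _ _).symm
          have h3 : |(x - t) * f (x - t)| ≤ D / (1 + (x - t) ^ 2) := by
            rw [le_div_iff₀ (by positivity)]
            exact hD1 (x - t)
          have h4 : 1 / t ≤ 2 / x := by
            rw [div_le_div_iff₀ ht0 hx]; linarith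
          calc |x - t| * |f (x - t)| / t = |(x - t) * f (x - t)| * (1 / t) := by
                rw [h1]; ring
          _ ≤ (D / (1 + (x - t) ^ 2)) * (2 / x) := by
                apply mul_le_mul h3 h4 (by positivity) (by positivity)
          _ = 2 * D / x * (1 + (x - t) ^ 2)⁻¹ := by
                field_simp
        have bound2 : |x - t| * |f (x + t)| / t ≤ 3 * ‖f (x + t)‖ := by
          have h5 : |x - t| ≤ x + t := abs_le.2 ⟨by linarith, by linarith⟩
          have h7 : (x + t) / t ≤ 3 := by
            rw [div_le_iff₀ ht0]; linarith
          calc |x - t| * |f (x + t)| / t ≤ (x + t) * |f (x + t)| / t := by gcongr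
          _ = (x + t) / t * |f (x + t)| := by ring
          _ ≤ 3 * |f (x + t)| := mul_le_mul_of_nonneg_right h7 (abs_nonneg _)
          _ = 3 * ‖f (x + t)‖ := by rw [Real.norm_eq_abs]
        exact habs.trans (add_le_add bound1 bound2)
      calc ‖∫ t in Ioi (x / 2), b x t‖ ≤ ∫ t in Ioi (x / 2), bnd t :=
            norm_integral_le_of_norm_le hbndint hptw
      _ = 2 * D / x * (∫ t in Ioi (x / 2), (1 + (x - t) ^ 2)⁻¹)
            + 3 * ∫ t in Ioi (x / 2), ‖f (x + t)‖ := by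
            rw [hbnddef]
            rw [integral_add ((i1.const_mul (2 * D / x)).integrableOn)
              (((f.integrable.norm.comp_add_left x).const_mul 3).integrableOn),
              integral_const_mul, integral_const_mul]
      _ ≤ 2 * D / x * Real.pi + 3 * ∫ u in Ioi (x + x / 2), ‖f u‖ := by
            have hπ : (∫ t in Ioi (x / 2), (1 + (x - t) ^ 2)⁻¹) ≤ Real.pi := by
              calc (∫ t in Ioi (x / 2), (1 + (x - t) ^ 2)⁻¹)
                  ≤ ∫ t : ℝ, (1 + (x - t) ^ 2)⁻¹ :=
                    setIntegral_le_integral i1 (Eventually.of_forall fun t => by positivity)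
              _ = Real.pi := by
                    rw [show (fun t : ℝ => (1 + (x - t) ^ 2)⁻¹)
                        = fun t => (fun u : ℝ => (1 + u ^ 2)⁻¹) (x - t) from rfl]
                    rw [integral_sub_left_eq_self (fun u : ℝ => (1 + u ^ 2)⁻¹) volume x]
                    exact integral_univ_inv_one_add_sq
            have hshift : (∫ t in Ioi (x / 2), ‖f (x + t)‖)
                = ∫ u in Ioi (x + x / 2), ‖f u‖ :=
              shift_Ioi (fun u => ‖f u‖) x (x / 2)
            rw [hshift]
            exact add_le_add (mul_le_mul_of_nonneg_left hπ (by positivity)) le_rfl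
      _ = 2 * D * Real.pi / x + 3 * ∫ u in Ioi (x + x / 2), ‖f u‖ := by ring
    calc ‖∫ t in Ioi (0:ℝ), b x t‖
        ≤ ‖∫ t in Ioc (0:ℝ) (x / 2), b x t‖ + ‖∫ t in Ioi (x / 2), b x t‖ := by
          rw [hsum]; exact norm_add_le _ _
    _ ≤ 8 * D / x + (2 * D * Real.pi / x + 3 * ∫ u in Ioi (x + x / 2), ‖f u‖) :=
          add_le_add e1 e2
    _ = β x := by rw [hβdef]; ring
  have hB : Tendsto (fun x => ∫ t in Ioi (0:ℝ), b x t) atTop (𝓝 0) :=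
    squeeze_zero_norm' hBbound hβ
  have : Tendsto (fun x => ((∫ u in Iic x, f u) - ∫ u in Ioi x, f u)
      + ∫ t in Ioi (0:ℝ), b x t) atTop (𝓝 ((∫ y, f y) + 0)) := hA.add hB
  rw [add_zero] at this
  exact this.congr (fun x => (heq x).symm)


lemma not_integrable (hf : (∫ y : ℝ, f y) ≠ 0) :
    ¬ Integrable (fun x => ∫ t in Ioi (0:ℝ), g f x t) := by
  intro hint
  set h : ℝ → ℝ := fun x => ∫ t in Ioi (0:ℝ), g f x t with hhdef
  have hT : Tendsto (fun x => x * h x) atTop (𝓝 (∫ y, f y)) := tendsto_xh f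
  have hIpos : 0 < |∫ y, f y| := abs_pos.2 hf
  have h1 : ∀ᶠ x in atTop, |∫ y, f y| / 2 ≤ |x * h x| :=
    hT.abs.eventually (eventually_ge_nhds (by linarith))
  obtain ⟨N, hN⟩ := eventually_atTop.1 (h1.and (eventually_ge_atTop (1:ℝ)))
  have key : IntegrableOn (fun x : ℝ => x⁻¹) (Ioi N) := by
    refine Integrable.mono' ((hint.norm.const_mul (2 / |∫ y, f y|)).integrableOn)
      (measurable_inv.aestronglyMeasurable) ?_
    filter_upwards [ae_restrict_mem measurableSet_Ioi] with x hx
    rw [mem_Ioi] at hx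
    obtain ⟨hge, hx1⟩ := hN x hx.le
    have hx0 : (0:ℝ) < x := lt_of_lt_of_le one_pos hx1
    have habs : |x * h x| = x * |h x| := by
      rw [abs_mul, abs_of_pos hx0]
    rw [habs] at hge
    rw [Real.norm_eq_abs, abs_of_pos (inv_pos.2 hx0), Real.norm_eq_abs]
    have hgoal : x⁻¹ ≤ 2 / |∫ y, f y| * |h x| := by
      rw [inv_eq_one_div, div_mul_eq_mul_div, div_le_div_iff₀ hx0 hIpos]
      nlinarith [abs_nonneg (h x)]
    exact hgoal
  exact not_IntegrableOn_Ioi_inv key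

end PV17

/-- For a Schwartz function `f : ℝ → ℝ` with `∫_ℝ f(y) dy ≠ 0`, the
principal value `h(x) = PV∫_ℝ f(y)/(x−y) dy` exists for every `x`, and `h` is not
Lebesgue integrable on `ℝ`: the Hilbert transform of a Schwartz function with
nonzero mean is never rapidly decreasing. -/
theorem pv_schwartz_not_integrable (f : SchwartzMap ℝ ℝ)
    (hf : (∫ y : ℝ, f y) ≠ 0) :
    ∃ h : ℝ → ℝ,
      (∀ x : ℝ,
        Tendsto
          (fun ε : ℝ => ∫ y in {y : ℝ | ε < |y - x|}, f y / (x - y))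
          (𝓝[>] 0) (𝓝 (h x)))
      ∧ ¬ Integrable h := by
  obtain ⟨D, hDpos, hD1, hD2, hD3, hD0⟩ := PV17.exists_bounds f
  refine ⟨fun x => ∫ t in Ioi (0:ℝ), PV17.g f x t, fun x => ?_, PV17.not_integrable f hf⟩
  have h1 := PV17.tendsto_pv f (PV17.integrableOn_g f hD2) (PV17.measurable_g f) x
  apply h1.congr'
  filter_upwards [self_mem_nhdsWithin] with ε (hε : 0 < ε)
  exact (PV17.pv_eq f x hε).symm
end

section
/- Let Q(ξ) = 4/(1 + ξ²), so that Q'(y) = −8y/(1 + y²)². Then for every ξ ∈ ℝ the principal value PV∫_ℝ Q'(y)/(ξ−y) dy exists and equals π·( Q(ξ)²/2 − Q(ξ) ) = 4π·(1 − ξ²)/(1 + ξ²)². Equivalently, Q satisfies the Benjamin–Ono solitary-wave equation −Q(ξ) − (1/π)·PV∫_ℝ Q'(y)/(ξ−y) dy + Q(ξ)²/2 = 0 with speed c = 1 (the case m = 2), i.e. Q is the Benjamin–Ono soliton. -/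
open MeasureTheory Filter Set Topology

/-- Regular part of the antiderivative of `Q'(y)/(ξ-y)`. -/
noncomputable def BOg (ξ y : ℝ) : ℝ :=
  -4*ξ/(1+ξ^2)^2 * Real.log (1+y^2)
  + (-8*ξ^2/(1+ξ^2)^2 + 4/(1+ξ^2)) * Real.arctan y
  + (8*y+8*ξ)/((1+ξ^2)*(2*(1+y^2)))

/-- Antiderivative of `Q'(y)/(ξ-y)` away from `y = ξ`. -/
noncomputable def BOF (ξ y : ℝ) : ℝ :=
  BOg ξ y + 8*ξ/(1+ξ^2)^2 * Real.log (ξ - y)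

lemma BOF_hasDerivAt (ξ y : ℝ) (h : ξ - y ≠ 0) :
    HasDerivAt (BOF ξ) ((-8*y/(1+y^2)^2)/(ξ-y)) y := by
  have h1y : (1:ℝ) + y^2 ≠ 0 := by positivity
  have hs : (1:ℝ) + ξ^2 ≠ 0 := by positivity
  have H1 : HasDerivAt (fun y : ℝ => Real.log (1+y^2)) (2*y/(1+y^2)) y := by
    have h' : HasDerivAt (fun y : ℝ => 1+y^2) (2*y) y := by
      simpa using ((hasDerivAt_pow 2 y).const_add 1)
    simpa using h'.log h1y
  have H2 := Real.hasDerivAt_arctan y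
  have H3 : HasDerivAt (fun y : ℝ => (8*y+8*ξ)/((1+ξ^2)*(2*(1+y^2))))
      ((8*((1+ξ^2)*(2*(1+y^2))) - (8*y+8*ξ)*((1+ξ^2)*(4*y)))
        / ((1+ξ^2)*(2*(1+y^2)))^2) y := by
    have hnum : HasDerivAt (fun y : ℝ => 8*y+8*ξ) 8 y := by
      simpa using ((hasDerivAt_id y).const_mul 8).add_const (8*ξ)
    have hden : HasDerivAt (fun y : ℝ => (1+ξ^2)*(2*(1+y^2))) ((1+ξ^2)*(4*y)) y := by
      have h' : HasDerivAt (fun y : ℝ => 2*(1+y^2)) (4*y) y := by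
        have := ((hasDerivAt_pow 2 y).const_add 1).const_mul 2
        exact this.congr_deriv (by norm_num; ring)
      simpa using h'.const_mul (1+ξ^2)
    exact hnum.div hden (by positivity)
  have H4 : HasDerivAt (fun y : ℝ => Real.log (ξ - y)) (-1/(ξ-y)) y := by
    have h' : HasDerivAt (fun y : ℝ => ξ - y) (-1) y := by
      simpa using (hasDerivAt_id y).const_sub ξ
    simpa using h'.log h
  have H := (((H1.const_mul (-4*ξ/(1+ξ^2)^2)).add
      (H2.const_mul (-8*ξ^2/(1+ξ^2)^2 + 4/(1+ξ^2)))).add H3).add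
      (H4.const_mul (8*ξ/(1+ξ^2)^2))
  have Heq : (BOF ξ) = fun y => -4*ξ/(1+ξ^2)^2 * Real.log (1+y^2)
      + (-8*ξ^2/(1+ξ^2)^2 + 4/(1+ξ^2)) * Real.arctan y
      + (8*y+8*ξ)/((1+ξ^2)*(2*(1+y^2)))
      + 8*ξ/(1+ξ^2)^2 * Real.log (ξ - y) := by
    funext z; simp [BOF, BOg]
  rw [Heq]
  exact H.congr_deriv (by field_simp; ring)

lemma BOF_tendsto (ξ : ℝ) {l : Filter ℝ} {A : ℝ}
    (hinv : Tendsto (fun y : ℝ => y⁻¹) l (𝓝 0))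
    (hne : ∀ᶠ y in l, y ≠ 0 ∧ ξ - y ≠ 0)
    (harctan : Tendsto Real.arctan l (𝓝 A)) :
    Tendsto (BOF ξ) l (𝓝 ((-8*ξ^2/(1+ξ^2)^2 + 4/(1+ξ^2)) * A)) := by
  have hs : (1:ℝ) + ξ^2 ≠ 0 := by positivity
  -- the ratio (1+y²)/(ξ-y)² tends to 1
  have hratio : Tendsto (fun y : ℝ => (1+y^2)/(ξ-y)^2) l (𝓝 1) := by
    have hnum : Tendsto (fun y : ℝ => (y⁻¹)^2 + 1) l (𝓝 ((0:ℝ)^2 + 1)) :=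
      (hinv.pow 2).add_const 1
    have hden : Tendsto (fun y : ℝ => (ξ*y⁻¹ - 1)^2) l (𝓝 ((ξ*0 - 1)^2)) :=
      ((hinv.const_mul ξ).sub_const 1).pow 2
    have hdiv := hnum.div hden (by norm_num)
    have hdiv' : Tendsto (fun y : ℝ => ((y⁻¹)^2 + 1)/((ξ*y⁻¹ - 1)^2)) l (𝓝 1) := by
      convert hdiv using 2 <;> norm_num
    refine hdiv'.congr' ?_
    filter_upwards [hne] with y hy
    have hy0 : y ≠ 0 := hy.1
    have hyx : ξ - y ≠ 0 := hy.2
    field_simp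
    try ring
  have hlog : Tendsto (fun y : ℝ => Real.log ((1+y^2)/(ξ-y)^2)) l (𝓝 0) := by
    have := (Real.continuousAt_log one_ne_zero).tendsto.comp hratio
    convert this using 2 <;> simp
  -- the rational term tends to 0
  have hrat : Tendsto (fun y : ℝ => (8*y+8*ξ)/((1+ξ^2)*(2*(1+y^2)))) l (𝓝 0) := by
    have hnum : Tendsto (fun y : ℝ => 8*y⁻¹ + 8*ξ*(y⁻¹)^2) l (𝓝 (8*0 + 8*ξ*0^2)) :=
      (hinv.const_mul 8).add ((hinv.pow 2).const_mul (8*ξ))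
    have hden : Tendsto (fun y : ℝ => (1+ξ^2)*(2*((y⁻¹)^2+1))) l
        (𝓝 ((1+ξ^2)*(2*((0:ℝ)^2+1)))) :=
      (((hinv.pow 2).add_const 1).const_mul 2).const_mul (1+ξ^2)
    have hdiv := hnum.div hden (by positivity)
    have hdiv' : Tendsto (fun y : ℝ => (8*y⁻¹ + 8*ξ*(y⁻¹)^2)/((1+ξ^2)*(2*((y⁻¹)^2+1))))
        l (𝓝 0) := by
      convert hdiv using 2 <;> simp
    refine hdiv'.congr' ?_
    filter_upwards [hne] with y hy
    have hy0 : y ≠ 0 := hy.1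
    have h1y : (1:ℝ) + y^2 ≠ 0 := by positivity
    field_simp
  have harctan' : Tendsto (fun y : ℝ => (-8*ξ^2/(1+ξ^2)^2 + 4/(1+ξ^2)) * Real.arctan y)
      l (𝓝 ((-8*ξ^2/(1+ξ^2)^2 + 4/(1+ξ^2)) * A)) := harctan.const_mul _
  have hlog' : Tendsto (fun y : ℝ => -4*ξ/(1+ξ^2)^2 * Real.log ((1+y^2)/(ξ-y)^2))
      l (𝓝 0) := by simpa using hlog.const_mul (-4*ξ/(1+ξ^2)^2)
  have hsum := (hlog'.add harctan').add hrat
  rw [show (0:ℝ) + (-8*ξ^2/(1+ξ^2)^2 + 4/(1+ξ^2)) * A + 0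
      = (-8*ξ^2/(1+ξ^2)^2 + 4/(1+ξ^2)) * A by ring] at hsum
  refine hsum.congr' ?_
  filter_upwards [hne] with y hy
  have hy0 : y ≠ 0 := hy.1
  have hyx : ξ - y ≠ 0 := hy.2
  have h1y : (1:ℝ) + y^2 ≠ 0 := by positivity
  have hlogsplit : Real.log ((1+y^2)/(ξ-y)^2)
      = Real.log (1+y^2) - 2*Real.log (ξ-y) := by
    rw [Real.log_div h1y (pow_ne_zero 2 hyx), Real.log_pow]
    push_cast; ring
  simp only [BOF, BOg, hlogsplit]
  ring

lemma BOF_tendsto_atTop (ξ : ℝ) :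
    Tendsto (BOF ξ) atTop (𝓝 ((-8*ξ^2/(1+ξ^2)^2 + 4/(1+ξ^2)) * (Real.pi/2))) := by
  refine BOF_tendsto ξ tendsto_inv_atTop_zero ?_
    (tendsto_nhds_of_tendsto_nhdsWithin Real.tendsto_arctan_atTop)
  filter_upwards [eventually_gt_atTop (max 0 ξ)] with y hy
  exact ⟨ne_of_gt (lt_of_le_of_lt (le_max_left 0 ξ) hy),
    sub_ne_zero.2 (ne_of_lt (lt_of_le_of_lt (le_max_right 0 ξ) hy))⟩

lemma BOF_tendsto_atBot (ξ : ℝ) :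
    Tendsto (BOF ξ) atBot (𝓝 ((-8*ξ^2/(1+ξ^2)^2 + 4/(1+ξ^2)) * (-(Real.pi/2)))) := by
  have hinv : Tendsto (fun y : ℝ => y⁻¹) atBot (𝓝 0) := by
    have h := (tendsto_neg_atBot_atTop : Tendsto (fun y : ℝ => -y) atBot atTop).inv_tendsto_atTop
    have h2 : Tendsto (fun y : ℝ => ((-y)⁻¹ : ℝ)) atBot (𝓝 0) := h
    have h3 := h2.neg
    simp only [neg_zero] at h3
    exact h3.congr fun y => by rw [inv_neg, neg_neg]
  refine BOF_tendsto ξ hinv ?_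
    (tendsto_nhds_of_tendsto_nhdsWithin Real.tendsto_arctan_atBot)
  filter_upwards [eventually_lt_atBot (min 0 ξ)] with y hy
  exact ⟨ne_of_lt (lt_of_lt_of_le hy (min_le_left 0 ξ)),
    sub_ne_zero.2 (ne_of_gt (lt_of_lt_of_le hy (min_le_right 0 ξ)))⟩

lemma BO_integrableOn_Ioi (ξ ε : ℝ) (hε : 0 < ε) :
    IntegrableOn (fun y => (-8*y/(1+y^2)^2)/(ξ-y)) (Ioi (ξ+ε)) := by
  refine Integrable.mono' ((integrable_inv_one_add_sq.const_mul (8/ε)).integrableOn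
    (s := Ioi (ξ+ε))) ?_ ?_
  · have hnum : Continuous (fun y : ℝ => -8*y/(1+y^2)^2) :=
      Continuous.div (by continuity) (by continuity) fun y => by positivity
    refine (ContinuousOn.div hnum.continuousOn
      (Continuous.continuousOn (by continuity)) ?_).aestronglyMeasurable measurableSet_Ioi
    intro y hy
    have hlt : ξ + ε < y := hy
    intro h0
    have hneg : ξ - y < 0 := by linarith
    rw [h0] at hneg
    exact lt_irrefl 0 hneg
  · refine (ae_restrict_iff' measurableSet_Ioi).2 (ae_of_all _ fun y hy => ?_)
    have hylt : ξ + ε < y := hy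
    have h1y : (0:ℝ) < 1 + y^2 := by positivity
    have habs : |ξ - y| = y - ξ := by
      rw [abs_of_nonpos (by linarith)]; ring
    have hxy : ε ≤ |ξ - y| := by rw [habs]; linarith
    have hyb : |y| ≤ 1 + y^2 := by
      nlinarith [abs_nonneg y, sq_abs y, sq_nonneg (|y| - 1)]
    have hnorm : ‖(-8*y/(1+y^2)^2)/(ξ-y)‖ = 8*|y|/(1+y^2)^2/|ξ-y| := by
      rw [Real.norm_eq_abs, abs_div, abs_div, abs_mul]
      simp [abs_of_pos h1y, abs_of_pos (pow_pos h1y 2)]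
      try ring_nf
    rw [hnorm, show 8/ε * (1+y^2)⁻¹ = 8*(1+y^2)/(1+y^2)^2/ε by field_simp]
    gcongr

lemma BO_integrableOn_Iic (ξ ε : ℝ) (hε : 0 < ε) :
    IntegrableOn (fun y => (-8*y/(1+y^2)^2)/(ξ-y)) (Iic (ξ-ε)) := by
  refine Integrable.mono' ((integrable_inv_one_add_sq.const_mul (8/ε)).integrableOn
    (s := Iic (ξ-ε))) ?_ ?_
  · have hnum : Continuous (fun y : ℝ => -8*y/(1+y^2)^2) :=
      Continuous.div (by continuity) (by continuity) fun y => by positivity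
    refine (ContinuousOn.div hnum.continuousOn
      (Continuous.continuousOn (by continuity)) ?_).aestronglyMeasurable measurableSet_Iic
    intro y hy
    have hle : y ≤ ξ - ε := hy
    exact ne_of_gt (by linarith : (0:ℝ) < ξ - y)
  · refine (ae_restrict_iff' measurableSet_Iic).2 (ae_of_all _ fun y hy => ?_)
    have hylt : y ≤ ξ - ε := hy
    have h1y : (0:ℝ) < 1 + y^2 := by positivity
    have habs : |ξ - y| = ξ - y := abs_of_nonneg (by linarith)
    have hxy : ε ≤ |ξ - y| := by rw [habs]; linarith
    have hyb : |y| ≤ 1 + y^2 := by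
      nlinarith [abs_nonneg y, sq_abs y, sq_nonneg (|y| - 1)]
    have hnorm : ‖(-8*y/(1+y^2)^2)/(ξ-y)‖ = 8*|y|/(1+y^2)^2/|ξ-y| := by
      rw [Real.norm_eq_abs, abs_div, abs_div, abs_mul]
      simp [abs_of_pos h1y, abs_of_pos (pow_pos h1y 2)]
      try ring_nf
    rw [hnorm, show 8/ε * (1+y^2)⁻¹ = 8*(1+y^2)/(1+y^2)^2/ε by field_simp]
    gcongr

lemma BOg_continuous (ξ : ℝ) : Continuous (BOg ξ) := by
  have h1 : Continuous (fun y : ℝ => Real.log (1+y^2)) := by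
    rw [continuous_iff_continuousAt]
    intro y
    exact (Real.continuousAt_log (by positivity)).comp (by fun_prop)
  have h2 : Continuous Real.arctan := Real.continuous_arctan
  have h3 : Continuous (fun y : ℝ => (8*y+8*ξ)/((1+ξ^2)*(2*(1+y^2)))) := by
    apply Continuous.div (by continuity) (by continuity)
    intro y; positivity
  exact ((continuous_const.mul h1).add (continuous_const.mul h2)).add h3

/-- For `Q(ξ) = 4/(1 + ξ²)`, so `Q'(y) = −8y/(1 + y²)²`, and every
`ξ ∈ ℝ`, the principal value `PV∫_ℝ Q'(y)/(ξ−y) dy` exists and equals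
`π·(Q(ξ)²/2 − Q(ξ)) = 4π·(1 − ξ²)/(1 + ξ²)²`; i.e. `Q` satisfies the speed-1
Benjamin–Ono solitary-wave equation `−Q − H(Q') + Q²/2 = 0`. -/
theorem benjamin_ono_soliton (ξ : ℝ) :
    Tendsto
      (fun ε : ℝ => ∫ y in {y : ℝ | ε < |y - ξ|}, (-8 * y / (1 + y ^ 2) ^ 2) / (ξ - y))
      (𝓝[>] 0)
      (𝓝 (Real.pi * ((4 / (1 + ξ ^ 2)) ^ 2 / 2 - 4 / (1 + ξ ^ 2))))
    ∧ Real.pi * ((4 / (1 + ξ ^ 2)) ^ 2 / 2 - 4 / (1 + ξ ^ 2))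
        = 4 * Real.pi * (1 - ξ ^ 2) / (1 + ξ ^ 2) ^ 2 := by
  have hs : (1:ℝ) + ξ^2 ≠ 0 := by positivity
  set c2 : ℝ := -8*ξ^2/(1+ξ^2)^2 + 4/(1+ξ^2) with hc2
  constructor
  · -- value of the integral for each ε > 0
    have key : ∀ ε : ℝ, 0 < ε →
        (∫ y in {y : ℝ | ε < |y - ξ|}, (-8 * y / (1 + y ^ 2) ^ 2) / (ξ - y))
        = BOg ξ (ξ-ε) - BOg ξ (ξ+ε) + c2 * Real.pi := by
      intro ε hε
      have hset : {y : ℝ | ε < |y - ξ|} = Iio (ξ-ε) ∪ Ioi (ξ+ε) := by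
        ext y
        simp only [mem_setOf_eq, mem_union, mem_Iio, mem_Ioi, lt_abs]
        constructor
        · rintro (h | h)
          · right; linarith
          · left; linarith
        · rintro (h | h)
          · right; linarith
          · left; linarith
      have hdisj : Disjoint (Iio (ξ-ε)) (Ioi (ξ+ε)) :=
        (Iio_disjoint_Ici (by linarith)).mono_right Ioi_subset_Ici_self
      have hIio : IntegrableOn (fun y => (-8*y/(1+y^2)^2)/(ξ-y)) (Iio (ξ-ε)) :=
        (BO_integrableOn_Iic ξ ε hε).mono_set Iio_subset_Iic_self
      have hIoi := BO_integrableOn_Ioi ξ ε hε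
      rw [hset, setIntegral_union hdisj measurableSet_Ioi hIio hIoi]
      have hIiceq : (∫ y in Iio (ξ-ε), (-8*y/(1+y^2)^2)/(ξ-y))
          = BOF ξ (ξ-ε) - c2 * (-(Real.pi/2)) := by
        rw [← integral_Iic_eq_integral_Iio]
        exact integral_Iic_of_hasDerivAt_of_tendsto
          ((BOF_hasDerivAt ξ (ξ-ε) (by simp; linarith)).continuousAt.continuousWithinAt)
          (fun x hx => BOF_hasDerivAt ξ x (by simp only [mem_Iio] at hx; intro h0; nlinarith))
          (BO_integrableOn_Iic ξ ε hε) (BOF_tendsto_atBot ξ)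
      have hIoieq : (∫ y in Ioi (ξ+ε), (-8*y/(1+y^2)^2)/(ξ-y))
          = c2 * (Real.pi/2) - BOF ξ (ξ+ε) := by
        exact integral_Ioi_of_hasDerivAt_of_tendsto
          ((BOF_hasDerivAt ξ (ξ+ε) (by intro h0; nlinarith)).continuousAt.continuousWithinAt)
          (fun x hx => BOF_hasDerivAt ξ x (by simp only [mem_Ioi] at hx; intro h0; nlinarith))
          hIoi (BOF_tendsto_atTop ξ)
      rw [hIiceq, hIoieq]
      have hF1 : BOF ξ (ξ-ε) = BOg ξ (ξ-ε) + 8*ξ/(1+ξ^2)^2 * Real.log ε := by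
        simp [BOF]
      have hF2 : BOF ξ (ξ+ε) = BOg ξ (ξ+ε) + 8*ξ/(1+ξ^2)^2 * Real.log ε := by
        simp only [BOF]
        rw [show ξ - (ξ+ε) = -ε by ring, Real.log_neg_eq_log]
      rw [hF1, hF2]
      ring
    have hlim : Tendsto (fun ε : ℝ => BOg ξ (ξ-ε) - BOg ξ (ξ+ε) + c2 * Real.pi)
        (𝓝[>] (0:ℝ)) (𝓝 (c2 * Real.pi)) := by
      have ht1 : Tendsto (fun ε : ℝ => ξ - ε) (𝓝[>] (0:ℝ)) (𝓝 ξ) := by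
        have h : Tendsto (fun ε : ℝ => ξ - ε) (𝓝 (0:ℝ)) (𝓝 (ξ - 0)) :=
          (continuous_const.sub continuous_id).tendsto 0
        rw [sub_zero] at h
        exact h.mono_left nhdsWithin_le_nhds
      have ht2 : Tendsto (fun ε : ℝ => ξ + ε) (𝓝[>] (0:ℝ)) (𝓝 ξ) := by
        have h : Tendsto (fun ε : ℝ => ξ + ε) (𝓝 (0:ℝ)) (𝓝 (ξ + 0)) :=
          (continuous_const.add continuous_id).tendsto 0
        rw [add_zero] at h
        exact h.mono_left nhdsWithin_le_nhds
      have h1 : Tendsto (fun ε : ℝ => BOg ξ (ξ-ε)) (𝓝[>] (0:ℝ)) (𝓝 (BOg ξ ξ)) :=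
        ((BOg_continuous ξ).tendsto ξ).comp ht1
      have h2 : Tendsto (fun ε : ℝ => BOg ξ (ξ+ε)) (𝓝[>] (0:ℝ)) (𝓝 (BOg ξ ξ)) :=
        ((BOg_continuous ξ).tendsto ξ).comp ht2
      have := (h1.sub h2).add_const (c2 * Real.pi)
      simpa using this
    have hval : c2 * Real.pi = Real.pi * ((4 / (1 + ξ ^ 2)) ^ 2 / 2 - 4 / (1 + ξ ^ 2)) := by
      rw [hc2]; field_simp; ring
    rw [← hval]
    refine hlim.congr' ?_
    filter_upwards [self_mem_nhdsWithin] with ε (hε : ε ∈ Ioi 0)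
    exact (key ε hε).symm
  · field_simp
    ring
end
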